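/- arXiv:2509.24612 — 2 statements merged into one kernel-verified Lean document; each statement's English description precedes it below -/
import Mathlib

section
/- Fix a real k > −1 and let a < b be consecutive positive zeros of J_{k+1}. Let c ∈ (a,b) satisfy J_k(c) = 0, and suppose c < 2·√((k+1)(k+2)). Then there exist unique d, e ∈ (a,b) with J_{k+2}(d) = 0 and J_{k+3}(e) = 0, and they satisfy a < d < e < c < b. -/
open Real

/-- Bessel function of the first kind of real order `k`, defined by its power series
(valid for `r > 0`, using real powers). -/
noncomputable def besselJ (k r : ℝ) : ℝ :=
  ∑' m : ℕ, ((-1 : ℝ) ^ m / (m.factorial * Real.Gamma (m + k + 1))) * (r / 2) ^ ((2 * m : ℝ) + k)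

open Set

/-- single term of the Bessel series -/
noncomputable def bt (k : ℝ) (m : ℕ) (r : ℝ) : ℝ :=
  ((-1 : ℝ) ^ m / (m.factorial * Real.Gamma (m + k + 1))) * (r / 2) ^ ((2 * m : ℝ) + k)

lemma besselJ_eq (k r : ℝ) : besselJ k r = ∑' m, bt k m r := rfl

lemma gamma_pos {k : ℝ} (hk : -1 < k) (m : ℕ) : 0 < Real.Gamma (m + k + 1) := by
  apply Real.Gamma_pos_of_pos
  have : (0:ℝ) ≤ m := Nat.cast_nonneg m
  linarith

lemma gamma_succ {k : ℝ} (hk : -1 < k) (m : ℕ) :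
    Real.Gamma ((m+1 : ℕ) + k + 1) = (m + k + 1) * Real.Gamma (m + k + 1) := by
  have h : ((m+1 : ℕ) : ℝ) + k + 1 = (m + k + 1) + 1 := by push_cast; ring
  rw [h, Real.Gamma_add_one]
  have : (0:ℝ) ≤ m := Nat.cast_nonneg m
  intro h; nlinarith

lemma bt_succ {k : ℝ} (hk : -1 < k) (m : ℕ) {r : ℝ} (hr : 0 < r) :
    bt k (m+1) r = bt k m r * (-((r/2)^(2:ℕ)) / ((m+1) * (m + k + 1))) := by
  have h2 : (0:ℝ) < r/2 := by linarith
  have hexp : ((2 * ((m:ℝ)+1)) + k) = ((2*m : ℝ) + k) + (2:ℕ) := by push_cast; ring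
  have hrw : (r/2) ^ ((2 * ((m+1:ℕ) :ℝ)) + k) = (r/2) ^ ((2*(m:ℝ)) + k) * (r/2)^(2:ℕ) := by
    push_cast
    rw [show (2 * ((m:ℝ)+1)) + k = ((2*(m:ℝ)) + k) + ((2:ℕ):ℝ) by push_cast; ring,
      Real.rpow_add h2, Real.rpow_natCast]
  have hfac : (((m+1 : ℕ)).factorial : ℝ) = (m+1) * (m.factorial) := by
    rw [Nat.factorial_succ]; push_cast; ring
  have hm : (0:ℝ) ≤ m := Nat.cast_nonneg m
  have hΓ := gamma_pos hk m
  have hΓ' := gamma_succ hk m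
  unfold bt
  rw [hrw, hΓ', hfac]
  have h1 : (0:ℝ) < m + 1 := by linarith
  have h3 : (0:ℝ) < m + k + 1 := by linarith
  have hfacpos : (0:ℝ) < m.factorial := by exact_mod_cast m.factorial_pos
  field_simp
  ring

lemma bt_abs {k : ℝ} (hk : -1 < k) (m : ℕ) {r : ℝ} (hr : 0 < r) :
    |bt k m r| = (r/2) ^ ((2*m : ℝ) + k) / (m.factorial * Real.Gamma (m + k + 1)) := by
  have h2 : (0:ℝ) < r/2 := by linarith
  have hΓ := gamma_pos hk m
  have hfacpos : (0:ℝ) < m.factorial := by exact_mod_cast m.factorial_pos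
  have hrp : (0:ℝ) < (r/2) ^ ((2*m : ℝ) + k) := Real.rpow_pos_of_pos h2 _
  unfold bt
  rw [abs_mul, abs_div, abs_pow, abs_neg, abs_one, one_pow, abs_of_pos hrp,
    abs_of_pos (by positivity)]
  ring

lemma bt_pos {k : ℝ} (hk : -1 < k) (m : ℕ) {r : ℝ} (hr : 0 < r) :
    0 < |bt k m r| := by
  rw [bt_abs hk m hr]
  have h2 : (0:ℝ) < r/2 := by linarith
  have hΓ := gamma_pos hk m
  have hfacpos : (0:ℝ) < m.factorial := by exact_mod_cast m.factorial_pos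
  have hrp : (0:ℝ) < (r/2) ^ ((2*m : ℝ) + k) := Real.rpow_pos_of_pos h2 _
  positivity

lemma summable_bt {k : ℝ} (hk : -1 < k) {r : ℝ} (hr : 0 < r) :
    Summable (fun m => bt k m r) := by
  obtain ⟨N, hN⟩ := exists_nat_ge (2 * (r/2)^(2:ℕ))
  apply summable_of_ratio_norm_eventually_le (r := 1/2) (by norm_num)
  filter_upwards [Filter.eventually_ge_atTop N] with m hm
  have hmN : (N:ℝ) ≤ m := by exact_mod_cast hm
  have hm0 : (0:ℝ) ≤ m := Nat.cast_nonneg m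
  rw [Real.norm_eq_abs, Real.norm_eq_abs, bt_succ hk m hr, abs_mul]
  have h1 : (0:ℝ) < m + 1 := by linarith
  have h3 : (0:ℝ) < m + k + 1 := by linarith
  have habs : |(-((r/2)^(2:ℕ)) / ((m+1) * ((m:ℝ) + k + 1)))|
      = (r/2)^(2:ℕ) / ((m+1) * ((m:ℝ) + k + 1)) := by
    rw [abs_div, abs_neg, abs_of_nonneg (by positivity), abs_of_pos (by positivity)]
  rw [habs]
  rw [mul_comm]
  apply mul_le_mul_of_nonneg_right _ (abs_nonneg _)
  rw [div_le_iff₀ (by positivity)]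
  nlinarith [sq_nonneg ((m:ℝ) - 1)]

/-- derivative of a single term -/
noncomputable def btd (k : ℝ) (m : ℕ) (r : ℝ) : ℝ :=
  ((-1 : ℝ) ^ m / (m.factorial * Real.Gamma (m + k + 1))) *
    (((2 * m : ℝ) + k) / 2 * (r / 2) ^ (((2 * m : ℝ) + k) - 1))

lemma bt_hasDerivAt (k : ℝ) (m : ℕ) {r : ℝ} (hr : 0 < r) :
    HasDerivAt (fun y => bt k m y) (btd k m r) r := by
  have h2 : r/2 ≠ 0 := by positivity
  have hpow : HasDerivAt (fun y : ℝ => (y/2) ^ ((2*m : ℝ) + k))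
      (((2*m:ℝ) + k) * (r/2) ^ (((2*m:ℝ) + k) - 1) * (1/2)) r := by
    have hb : HasDerivAt (fun y : ℝ => y/2) (1/2) r := by
      simpa using (hasDerivAt_id r).div_const 2
    exact (Real.hasDerivAt_rpow_const (p := (2*m:ℝ)+k) (Or.inl h2)).comp r hb
  have := hpow.const_mul ((-1 : ℝ) ^ m / (m.factorial * Real.Gamma (m + k + 1)))
  refine this.congr_deriv ?_
  unfold btd; ring

lemma besselJ_hasDerivAt {k : ℝ} (hk : -1 < k) {r : ℝ} (hr : 0 < r) :
    HasDerivAt (besselJ k) (∑' m, btd k m r) r := by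
  -- work on the interval Ioo (r/2) (r+1)
  set C : ℝ := max ((r/4) ^ (k - 1)) (((r+1)/2) ^ (k-1)) with hC
  have hr4 : (0:ℝ) < r/4 := by linarith
  have hr12 : (0:ℝ) < (r+1)/2 := by linarith
  have hCpos : 0 < C := lt_max_of_lt_left (Real.rpow_pos_of_pos hr4 _)
  set u : ℕ → ℝ := fun m => (2*(m:ℝ) + |k| + 2) / (2 * m.factorial * Real.Gamma (m + k + 1)) *
      (((r+1)/2) ^ (2*m) * C) with hu
  have hupos : ∀ m, 0 < u m := by
    intro m
    have hΓ := gamma_pos hk m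
    have hfacpos : (0:ℝ) < m.factorial := by exact_mod_cast m.factorial_pos
    have hm0 : (0:ℝ) ≤ m := Nat.cast_nonneg m
    have h1 : (0:ℝ) < 2*(m:ℝ) + |k| + 2 := by positivity
    positivity
  have husum : Summable u := by
    obtain ⟨N, hN⟩ := exists_nat_ge (4 * ((r+1)/2)^(2:ℕ))
    apply summable_of_ratio_norm_eventually_le (r := 1/2) (by norm_num)
    filter_upwards [Filter.eventually_ge_atTop N] with m hm
    have hmN : (N:ℝ) ≤ m := by exact_mod_cast hm
    have hm0 : (0:ℝ) ≤ m := Nat.cast_nonneg m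
    have hΓ := gamma_pos hk m
    have hΓ' := gamma_succ hk m
    have hfacpos : (0:ℝ) < m.factorial := by exact_mod_cast m.factorial_pos
    have hfac : (((m+1 : ℕ)).factorial : ℝ) = (m+1) * (m.factorial) := by
      rw [Nat.factorial_succ]; push_cast; ring
    rw [Real.norm_eq_abs, Real.norm_eq_abs, abs_of_pos (hupos _), abs_of_pos (hupos _)]
    have h1 : (0:ℝ) < m + 1 := by linarith
    have h3 : (0:ℝ) < m + k + 1 := by linarith
    have habsk : (0:ℝ) ≤ |k| := abs_nonneg k
    have hpowpos : (0:ℝ) < ((r+1)/2) ^ (2*m) := by positivity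
    have hfrac : u (m+1) = u m *
        ((2*(m:ℝ)+|k|+4) * ((r+1)/2)^(2:ℕ) / ((2*(m:ℝ)+|k|+2)*((m+1)*((m:ℝ)+k+1)))) := by
      rw [hu]
      simp only []
      rw [hΓ', hfac, show 2*(m+1) = 2*m+2 by ring, pow_add]
      push_cast
      field_simp
      ring
    rw [hfrac]
    have hle : (2*(m:ℝ)+|k|+4) * ((r+1)/2)^(2:ℕ) / ((2*(m:ℝ)+|k|+2)*((m+1)*((m:ℝ)+k+1)))
        ≤ 1/2 := by
      rw [div_le_iff₀ (by positivity)]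
      have hQ : (0:ℝ) ≤ ((r+1)/2)^(2:ℕ) := by positivity
      have h4Q : 4 * ((r+1)/2)^(2:ℕ) ≤ (m:ℝ) := le_trans hN hmN
      nlinarith [mul_le_mul_of_nonneg_left h4Q (show (0:ℝ) ≤ 2*(m:ℝ)+|k|+2 by linarith),
        mul_le_mul_of_nonneg_left hQ (show (0:ℝ) ≤ 2*(m:ℝ)+|k|+2 by linarith)]
    calc u m * ((2*(m:ℝ)+|k|+4) * ((r+1)/2)^(2:ℕ) / ((2*(m:ℝ)+|k|+2)*((m+1)*((m:ℝ)+k+1))))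
        ≤ u m * (1/2) := mul_le_mul_of_nonneg_left hle (le_of_lt (hupos m))
      _ = 1/2 * u m := by ring
  have key : HasDerivAt (fun y => ∑' m, bt k m y) (∑' m, btd k m r) r := by
    apply hasDerivAt_tsum_of_isPreconnected husum (isOpen_Ioo (a := r/2) (b := r+1))
      (isPreconnected_Ioo) (fun m y hy => bt_hasDerivAt k m (by
        rcases hy with ⟨h1, h2⟩; linarith))
      _ (show r ∈ Ioo (r/2) (r+1) by constructor <;> [linarith; linarith])
      (summable_bt hk hr)
      (show r ∈ Ioo (r/2) (r+1) by constructor <;> [linarith; linarith])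
    · intro m y hy
      rcases hy with ⟨hy1, hy2⟩
    -- bound ‖btd k m y‖ ≤ u m
      have hy0 : 0 < y := by linarith
      have hy2' : 0 < y/2 := by linarith
      have hΓ := gamma_pos hk m
      have hfacpos : (0:ℝ) < m.factorial := by exact_mod_cast m.factorial_pos
      have hm0 : (0:ℝ) ≤ m := Nat.cast_nonneg m
      rw [Real.norm_eq_abs]
      unfold btd
      rw [abs_mul, abs_mul, abs_div, abs_pow, abs_neg, abs_one, one_pow, abs_div,
        abs_of_pos (by positivity : (0:ℝ) < (m.factorial : ℝ) * Real.Gamma (m + k + 1)),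
        abs_of_pos (Real.rpow_pos_of_pos hy2' _), abs_of_pos (show (0:ℝ) < 2 by norm_num)]
      have hsplit : (y/2) ^ (((2*m : ℝ) + k) - 1) = (y/2)^(2*m) * (y/2)^(k-1) := by
        rw [show ((2*m : ℝ) + k) - 1 = ((2*m : ℕ) : ℝ) + (k - 1) by push_cast; ring,
          Real.rpow_add hy2', Real.rpow_natCast]
      rw [hsplit]
      have hb1 : (y/2)^(2*m) ≤ ((r+1)/2)^(2*m) := by
        apply pow_le_pow_left₀ (by positivity)
        linarith
      have hb2 : (y/2)^(k-1) ≤ C := by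
        rcases le_or_gt 0 (k-1) with hsgn | hsgn
        · refine le_trans (Real.rpow_le_rpow (by positivity) (by linarith) hsgn) (le_max_right _ _)
        · refine le_trans (Real.rpow_le_rpow_of_nonpos hr4 (by linarith) (le_of_lt hsgn))
            (le_max_left _ _)
      have hb3 : |(2*m : ℝ) + k| ≤ 2*(m:ℝ) + |k| + 2 := by
        have := abs_add_le (2*(m:ℝ)) k
        rw [abs_of_nonneg (by positivity : (0:ℝ) ≤ 2*(m:ℝ))] at this
        linarith
      rw [hu]
      simp only []
      have hprod : (y/2)^(2*m) * (y/2)^(k-1) ≤ ((r+1)/2)^(2*m) * C := by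
        apply mul_le_mul hb1 hb2 (le_of_lt (Real.rpow_pos_of_pos hy2' _)) (by positivity)
      calc 1 / ((m.factorial:ℝ) * Real.Gamma (↑m + k + 1)) * (|2 * ↑m + k| / 2 *
            ((y/2)^(2*m) * (y/2)^(k-1)))
          ≤ 1 / ((m.factorial:ℝ) * Real.Gamma (↑m + k + 1)) * ((2*(m:ℝ) + |k| + 2) / 2 *
            (((r+1)/2)^(2*m) * C)) := by
            apply mul_le_mul_of_nonneg_left _ (by positivity)
            apply mul_le_mul (by linarith [hb3]) hprod
              (by positivity) (by positivity)
        _ = (2*(m:ℝ) + |k| + 2) / (2 * m.factorial * Real.Gamma (↑m + k + 1)) *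
            (((r+1)/2) ^ (2*m) * C) := by ring
  exact key

lemma gamma_shift {k : ℝ} (hk : -1 < k) (m : ℕ) :
    Real.Gamma ((m:ℝ) + (k+1) + 1) = ((m:ℝ) + k + 1) * Real.Gamma ((m:ℝ) + k + 1) := by
  have hm0 : (0:ℝ) ≤ m := Nat.cast_nonneg m
  rw [show (m:ℝ) + (k+1) + 1 = ((m:ℝ)+k+1)+1 by ring,
    Real.Gamma_add_one (by intro h; nlinarith)]

lemma btd_succ_eq {k : ℝ} (hk : -1 < k) (m : ℕ) {r : ℝ} (hr : 0 < r) :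
    btd (k+1) m r = bt k m r - (k+1)/r * bt (k+1) m r := by
  have h2 : (0:ℝ) < r/2 := by linarith
  have hm0 : (0:ℝ) ≤ m := Nat.cast_nonneg m
  have hΓ := gamma_pos hk m
  have hfacpos : (0:ℝ) < m.factorial := by exact_mod_cast m.factorial_pos
  unfold btd bt
  rw [gamma_shift hk m]
  rw [show ((2*m:ℝ) + (k+1)) - 1 = (2*m:ℝ) + k by ring]
  have eA : (r/2) ^ ((2*(m:ℝ)) + (k+1)) = (r/2) ^ ((2*(m:ℝ))+k) * (r/2) := by
    rw [show (2*(m:ℝ))+(k+1) = ((2*(m:ℝ))+k)+1 by ring, Real.rpow_add h2, Real.rpow_one]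
  rw [eA]
  have hX : (0:ℝ) < (r/2) ^ ((2*m:ℝ)+k) := Real.rpow_pos_of_pos h2 _
  have h3 : (0:ℝ) < (m:ℝ) + k + 1 := by linarith
  field_simp
  ring

lemma besselJ_hasDerivAt_succ {k : ℝ} (hk : -1 < k) {r : ℝ} (hr : 0 < r) :
    HasDerivAt (besselJ (k+1)) (besselJ k r - (k+1)/r * besselJ (k+1) r) r := by
  have hk1 : -1 < k+1 := by linarith
  have h := besselJ_hasDerivAt hk1 hr
  have heq : ∑' m, btd (k+1) m r = besselJ k r - (k+1)/r * besselJ (k+1) r := by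
    rw [tsum_congr (fun m => btd_succ_eq hk m hr), besselJ_eq, besselJ_eq,
      Summable.tsum_sub (summable_bt hk hr) ((summable_bt hk1 hr).mul_left ((k+1)/r))]
    congr 1
    exact tsum_mul_left
  rwa [heq] at h

lemma besselJ_recurrence {k : ℝ} (hk : -1 < k) {r : ℝ} (hr : 0 < r) :
    besselJ k r + besselJ (k+2) r = 2*(k+1)/r * besselJ (k+1) r := by
  have hk1 : -1 < k+1 := by linarith
  have hk2 : -1 < k+2 := by linarith
  have h2 : (0:ℝ) < r/2 := by linarith
  set g : ℕ → ℝ := fun m => bt k m r - 2*(k+1)/r * bt (k+1) m r with hg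
  have hsum : HasSum g (besselJ k r - 2*(k+1)/r * besselJ (k+1) r) := by
    rw [besselJ_eq, besselJ_eq]
    exact (summable_bt hk hr).hasSum.sub
      (((summable_bt hk1 hr).hasSum.mul_left (2*(k+1)/r)))
  have hg0 : g 0 = 0 := by
    simp only [g, bt, pow_zero, Nat.factorial_zero, Nat.cast_one, one_mul,
      Nat.cast_zero, mul_zero, zero_add]
    have hΓ1 : Real.Gamma (k + 1 + 1) = (k+1) * Real.Gamma (k + 1) := by
      rw [Real.Gamma_add_one (by intro h; nlinarith)]
    rw [hΓ1]
    have eA : (r/2) ^ (k+1) = (r/2) ^ k * (r/2) := by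
      rw [Real.rpow_add h2, Real.rpow_one]
    rw [eA]
    have hΓ : 0 < Real.Gamma (k + 1) := Real.Gamma_pos_of_pos (by linarith)
    have hX : (0:ℝ) < (r/2) ^ k := Real.rpow_pos_of_pos h2 _
    have hk0 : k + 1 ≠ 0 := by intro h; nlinarith
    field_simp
    ring
  have hgsucc : ∀ m : ℕ, g (m+1) = - bt (k+2) m r := by
    intro m
    have hm0 : (0:ℝ) ≤ m := Nat.cast_nonneg m
    have hΓ := gamma_pos hk m
    have h3 : (0:ℝ) < (m:ℝ) + k + 1 := by linarith
    have h4 : (0:ℝ) < (m:ℝ) + k + 2 := by linarith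
    have hfacpos : (0:ℝ) < m.factorial := by exact_mod_cast m.factorial_pos
    have hfac : (((m+1 : ℕ)).factorial : ℝ) = ((m:ℝ)+1) * (m.factorial) := by
      rw [Nat.factorial_succ]; push_cast; ring
    have hΓ1 : Real.Gamma (((m+1:ℕ):ℝ) + k + 1) = ((m:ℝ)+k+1) * Real.Gamma ((m:ℝ) + k + 1) :=
      gamma_succ hk m
    have hΓ2 : Real.Gamma (((m+1:ℕ):ℝ) + (k+1) + 1)
        = ((m:ℝ)+k+2) * (((m:ℝ)+k+1) * Real.Gamma ((m:ℝ) + k + 1)) := by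
      have ha := gamma_succ hk1 m
      have hb := gamma_shift hk m
      rw [ha, hb]; ring_nf
    have hΓ3 : Real.Gamma ((m:ℝ) + (k+2) + 1)
        = ((m:ℝ)+k+2) * (((m:ℝ)+k+1) * Real.Gamma ((m:ℝ) + k + 1)) := by
      have ha : (m:ℝ) + (k+2) + 1 = (m:ℝ) + ((k+1)+1) + 1 := by ring
      rw [ha, gamma_shift hk1 m, gamma_shift hk m]
      ring_nf
    simp only [hg, bt]
    rw [hΓ1, hΓ2, hΓ3, hfac]
    -- exponents
    have f1 : (r/2) ^ (((2*((m+1:ℕ):ℝ))) + k) = (r/2) ^ ((2*(m:ℝ))+k+2) := by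
      rw [show ((2*((m+1:ℕ):ℝ))) + k = (2*(m:ℝ))+k+2 by push_cast; ring]
    have f2 : (r/2) ^ (((2*((m+1:ℕ):ℝ))) + (k+1)) = (r/2) ^ ((2*(m:ℝ))+k+2) * (r/2) := by
      rw [show ((2*((m+1:ℕ):ℝ))) + (k+1) = ((2*(m:ℝ))+k+2)+1 by push_cast; ring,
        Real.rpow_add h2, Real.rpow_one]
    have f3 : (r/2) ^ (((2*(m:ℝ))) + (k+2)) = (r/2) ^ ((2*(m:ℝ))+k+2) := by
      rw [show ((2*(m:ℝ))) + (k+2) = (2*(m:ℝ))+k+2 by ring]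
    rw [f1, f2, f3]
    have hX : (0:ℝ) < (r/2) ^ ((2*m:ℝ)+k+2) := Real.rpow_pos_of_pos h2 _
    rw [pow_succ]
    field_simp
    ring
  have hsum2 : HasSum (fun m => g (m+1)) (- besselJ (k+2) r) := by
    have : (fun m => g (m+1)) = fun m => - bt (k+2) m r := funext hgsucc
    rw [this, besselJ_eq]
    exact (summable_bt hk2 hr).hasSum.neg
  have hsum3 : HasSum g (- besselJ (k+2) r + ∑ i ∈ Finset.range 1, g i) :=
    (hasSum_nat_add_iff 1).mp hsum2
  have := hsum.unique hsum3
  simp only [Finset.range_one, Finset.sum_singleton, hg0, add_zero] at this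
  linarith

lemma besselJ_pos_of_large {k r : ℝ} (hr : 0 < r) (h : 3 * (r/2)^(2:ℕ) ≤ k + 1) :
    0 < besselJ k r := by
  have h2 : (0:ℝ) < r/2 := by linarith
  have hq0 : (0:ℝ) < (r/2)^(2:ℕ) := by positivity
  have hk : -1 < k := by nlinarith
  have hk1 : (0:ℝ) < k + 1 := by nlinarith
  set B : ℝ := |bt k 0 r| with hB
  have hBpos : 0 < B := bt_pos hk 0 hr
  set q : ℝ := (r/2)^(2:ℕ) / (k+1) with hq
  have hqpos : 0 < q := by positivity
  have hq3 : q ≤ 1/3 := by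
    rw [hq, div_le_iff₀ hk1]; linarith
  have hbound : ∀ m : ℕ, |bt k m r| ≤ B * q ^ m := by
    intro m
    induction m with
    | zero => simp [hB]
    | succ n ih =>
      have hn0 : (0:ℝ) ≤ n := Nat.cast_nonneg n
      rw [bt_succ hk n hr, abs_mul]
      have habs : |(-((r/2)^(2:ℕ)) / (((n:ℝ)+1) * ((n:ℝ) + k + 1)))|
          = (r/2)^(2:ℕ) / (((n:ℝ)+1) * ((n:ℝ) + k + 1)) := by
        rw [abs_div, abs_neg, abs_of_nonneg (by positivity),
          abs_of_pos (by nlinarith)]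
      rw [habs]
      have hle : (r/2)^(2:ℕ) / (((n:ℝ)+1) * ((n:ℝ) + k + 1)) ≤ q := by
        rw [hq, div_le_div_iff₀ (by nlinarith) hk1]
        have key : (k+1) ≤ ((n:ℝ)+1)*((n:ℝ)+k+1) := by nlinarith
        nlinarith [mul_le_mul_of_nonneg_left key (le_of_lt hq0)]
      calc |bt k n r| * ((r/2)^(2:ℕ) / (((n:ℝ)+1) * ((n:ℝ) + k + 1)))
          ≤ (B * q ^ n) * q :=
            mul_le_mul ih hle (div_nonneg (by positivity) (by nlinarith)) (by positivity)
        _ = B * q ^ (n+1) := by ring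
  have hsum : Summable (fun m => bt k m r) := summable_bt hk hr
  have hsum1 : Summable (fun m => bt k (m+1) r) :=
    (_root_.summable_nat_add_iff (f := fun m => bt k m r) 1).mpr hsum
  have hgeom : Summable (fun m : ℕ => B * q ^ (m+1)) := by
    apply Summable.congr (((summable_geometric_of_lt_one (le_of_lt hqpos)
      (by linarith)).mul_left (B*q)))
    intro m; ring
  have htail : |∑' m, bt k (m+1) r| ≤ ∑' m : ℕ, B * q ^ (m+1) := by
    calc |∑' m, bt k (m+1) r| ≤ ∑' m, |bt k (m+1) r| := by
          simpa [Real.norm_eq_abs] using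
            norm_tsum_le_tsum_norm (f := fun m => bt k (m+1) r)
              (by simpa [Real.norm_eq_abs] using hsum1.abs)
      _ ≤ ∑' m : ℕ, B * q ^ (m+1) := by
          apply Summable.tsum_le_tsum (fun m => hbound (m+1)) hsum1.abs hgeom
  have hgval : ∑' m : ℕ, B * q ^ (m+1) ≤ B / 2 := by
    have : (fun m : ℕ => B * q ^ (m+1)) = fun m : ℕ => (B * q) * q ^ m := by
      funext m; ring
    rw [this, tsum_mul_left, tsum_geometric_of_lt_one (le_of_lt hqpos) (by linarith)]
    rw [mul_comm B q, mul_assoc]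
    have hinv : (1 - q)⁻¹ ≤ (3:ℝ)/2 := by
      rw [inv_le_comm₀ (by linarith) (by norm_num)]
      linarith
    calc q * (B * (1-q)⁻¹) ≤ (1/3) * (B * ((3:ℝ)/2)) := by
          apply mul_le_mul hq3 (mul_le_mul_of_nonneg_left hinv (le_of_lt hBpos))
            (by have h1q : (0:ℝ) < 1 - q := by linarith
                positivity) (by norm_num)
      _ = B / 2 := by ring
  have hb0 : bt k 0 r = B := by
    rw [hB, abs_of_pos]
    have hΓ := gamma_pos hk 0
    have hX : (0:ℝ) < (r/2) ^ ((2*(0:ℕ):ℝ)+k) := Real.rpow_pos_of_pos h2 _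
    unfold bt
    simp only [pow_zero, Nat.factorial_zero, Nat.cast_one, one_mul]
    positivity
  rw [besselJ_eq, hsum.tsum_eq_zero_add, hb0]
  have := abs_le.mp htail
  linarith [hgval, this.1]

lemma besselJ_no_common_zero {k r : ℝ} (hk : -1 < k) (hr : 0 < r)
    (h0 : besselJ k r = 0) (h1 : besselJ (k+1) r = 0) : False := by
  have key : ∀ n : ℕ, besselJ (k + n) r = 0 ∧ besselJ (k + n + 1) r = 0 := by
    intro n
    induction n with
    | zero => simpa using ⟨h0, h1⟩
    | succ n ih =>
      have hn0 : (0:ℝ) ≤ n := Nat.cast_nonneg n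
      have hkn : -1 < k + n := by linarith
      have hrec := besselJ_recurrence (k := k + n) hkn hr
      constructor
      · rw [show k + ((n+1:ℕ):ℝ) = (k + n) + 1 by push_cast; ring]
        exact ih.2
      · rw [show k + ((n+1:ℕ):ℝ) + 1 = (k + n) + 2 by push_cast; ring]
        have h' := hrec
        rw [ih.1, ih.2, mul_zero, zero_add] at h'
        exact h' 
  obtain ⟨n, hn⟩ := exists_nat_ge (3*(r/2)^(2:ℕ) - k - 1)
  have hpos := besselJ_pos_of_large (k := k + n) hr (by linarith)
  exact absurd (key n).1 (ne_of_gt hpos)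

open Filter Topology in
lemma deriv_nonneg_right {f : ℝ → ℝ} {p b L : ℝ} (hpb : p < b)
    (hd : HasDerivAt f L p) (hfp : f p = 0) (hpos : ∀ y ∈ Ioo p b, 0 < f y) : 0 ≤ L := by
  have ht : Tendsto (slope f p) (𝓝[>] p) (𝓝 L) :=
    (hasDerivAt_iff_tendsto_slope.mp hd).mono_left
      (nhdsWithin_mono _ (fun y hy => ne_of_gt hy))
  apply ge_of_tendsto ht
  filter_upwards [Ioo_mem_nhdsGT_of_mem ⟨le_refl p, hpb⟩] with y hy
  have hfy := hpos y hy
  rw [slope_def_field, hfp, sub_zero]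
  exact le_of_lt (div_pos hfy (by linarith [hy.1]))

open Filter Topology in
lemma deriv_nonpos_left {f : ℝ → ℝ} {a q L : ℝ} (haq : a < q)
    (hd : HasDerivAt f L q) (hfq : f q = 0) (hpos : ∀ y ∈ Ioo a q, 0 < f y) : L ≤ 0 := by
  have ht : Tendsto (slope f q) (𝓝[<] q) (𝓝 L) :=
    (hasDerivAt_iff_tendsto_slope.mp hd).mono_left
      (nhdsWithin_mono _ (fun y hy => ne_of_lt hy))
  apply le_of_tendsto ht
  filter_upwards [Ioo_mem_nhdsLT_of_mem ⟨haq, le_refl q⟩] with y hy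
  have hfy := hpos y hy
  rw [slope_def_field, hfq, sub_zero]
  exact le_of_lt (div_neg_of_pos_of_neg hfy (by linarith [hy.2]))

open Filter Topology in
lemma exists_pos_right {f : ℝ → ℝ} {p q L : ℝ} (hpq : p < q)
    (hd : HasDerivAt f L p) (hfp : f p = 0) (hL : 0 < L) :
    ∃ y, p < y ∧ y < q ∧ 0 < f y := by
  have ht : Tendsto (slope f p) (𝓝[>] p) (𝓝 L) :=
    (hasDerivAt_iff_tendsto_slope.mp hd).mono_left
      (nhdsWithin_mono _ (fun y hy => ne_of_gt hy))
  have h1 : ∀ᶠ y in 𝓝[>] p, 0 < slope f p y := ht.eventually (eventually_gt_nhds hL)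
  have h2 : ∀ᶠ y in 𝓝[>] p, y ∈ Ioo p q := Ioo_mem_nhdsGT_of_mem ⟨le_refl p, hpq⟩
  obtain ⟨y, hy1, hy2⟩ := (h1.and h2).exists
  refine ⟨y, hy2.1, hy2.2, ?_⟩
  rw [slope_def_field, hfp, sub_zero] at hy1
  have := mul_pos hy1 (show (0:ℝ) < y - p by linarith [hy2.1])
  rwa [div_mul_cancel₀ _ (by linarith [hy2.1] : y - p ≠ 0)] at this

open Filter Topology in
lemma neg_on_Icc {f f' : ℝ → ℝ} {p q : ℝ} (hpq : p < q)
    (hd : ∀ x ∈ Icc p q, HasDerivAt f (f' x) x)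
    (hp : f p < 0)
    (hz : ∀ z ∈ Ioc p q, f z = 0 → f' z < 0) :
    ∀ x ∈ Icc p q, f x < 0 := by
  by_contra hcon
  push_neg at hcon
  obtain ⟨x₁, hx₁, hfx₁⟩ := hcon
  set S := {x | x ∈ Icc p q ∧ 0 ≤ f x} with hS
  have hcont : ContinuousOn f (Icc p q) := fun x hx =>
    (hd x hx).continuousAt.continuousWithinAt
  have hSc : IsClosed S := by
    have : S = Icc p q ∩ f ⁻¹' (Ici 0) := by
      ext x; simp [hS, Set.mem_inter_iff, Set.mem_preimage]
    rw [this]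
    exact ContinuousOn.preimage_isClosed_of_isClosed hcont isClosed_Icc isClosed_Ici
  have hne : S.Nonempty := ⟨x₁, hx₁, hfx₁⟩
  have hbdd : BddBelow S := ⟨p, fun x hx => hx.1.1⟩
  set z := sInf S with hzdef
  have hzS : z ∈ S := hSc.csInf_mem hne hbdd
  have hzq : z ≤ q := hzS.1.2
  have hzp : p < z := by
    rcases eq_or_lt_of_le hzS.1.1 with h | h
    · exfalso; rw [h] at hp; linarith [hzS.2]
    · exact h
  have hneg : ∀ y, p ≤ y → y < z → f y < 0 := by
    intro y h1 h2
    by_contra h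
    push_neg at h
    have hyS : y ∈ S := ⟨⟨h1, le_trans (le_of_lt h2) hzq⟩, h⟩
    have := csInf_le hbdd hyS
    rw [← hzdef] at this
    linarith
  have hfz : f z = 0 := by
    rcases eq_or_lt_of_le hzS.2 with h | h
    · exact h.symm
    · exfalso
      have hca : ContinuousAt f z := (hd z hzS.1).continuousAt
      have h1 : ∀ᶠ y in 𝓝[<] z, 0 < f y :=
        ((hca.eventually (eventually_gt_nhds h)).filter_mono nhdsWithin_le_nhds)
      have h2 : ∀ᶠ y in 𝓝[<] z, y ∈ Ioo p z := Ioo_mem_nhdsLT_of_mem ⟨hzp, le_refl z⟩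
      obtain ⟨y, hy1, hy2⟩ := (h1.and h2).exists
      have := hneg y (le_of_lt hy2.1) hy2.2
      linarith
  have hfz' := hz z ⟨hzp, hzq⟩ hfz
  have h0 : 0 ≤ f' z := by
    have ht : Tendsto (slope f z) (𝓝[<] z) (𝓝 (f' z)) :=
      (hasDerivAt_iff_tendsto_slope.mp (hd z hzS.1)).mono_left
        (nhdsWithin_mono _ (fun y hy => ne_of_lt hy))
    apply ge_of_tendsto ht
    filter_upwards [Ioo_mem_nhdsLT_of_mem ⟨hzp, le_refl z⟩] with y hy
    have hfy := hneg y (le_of_lt hy.1) hy.2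
    rw [slope_def_field, hfz, sub_zero]
    exact le_of_lt (div_pos_of_neg_of_neg hfy (by linarith [hy.2]))
  linarith

lemma at_most_one_zero {f f' : ℝ → ℝ} {p q : ℝ}
    (hd : ∀ x ∈ Icc p q, HasDerivAt f (f' x) x)
    (hz : ∀ z ∈ Ioo p q, f z = 0 → 0 < f' z) :
    ∀ z₁ ∈ Ioo p q, ∀ z₂ ∈ Ioo p q, f z₁ = 0 → f z₂ = 0 → z₁ = z₂ := by
  suffices H : ∀ z₁ ∈ Ioo p q, ∀ z₂ ∈ Ioo p q, f z₁ = 0 → f z₂ = 0 → ¬ (z₁ < z₂) by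
    intro z₁ h₁ z₂ h₂ e₁ e₂
    rcases lt_trichotomy z₁ z₂ with h | h | h
    · exact absurd h (H z₁ h₁ z₂ h₂ e₁ e₂)
    · exact h
    · exact absurd h (H z₂ h₂ z₁ h₁ e₂ e₁)
  intro z₁ h₁ z₂ h₂ e₁ e₂ hlt
  obtain ⟨y, hy1, hy2, hy3⟩ :=
    exists_pos_right hlt (hd z₁ ⟨le_of_lt h₁.1, le_of_lt h₁.2⟩) e₁ (hz z₁ h₁ e₁)
  have hIcc : Icc y z₂ ⊆ Icc p q := Icc_subset_Icc
    (le_of_lt (lt_trans h₁.1 hy1)) (le_of_lt h₂.2)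
  have hfinal := neg_on_Icc (f := fun x => - f x) (f' := fun x => - f' x) hy2
    (fun x hx => (hd x (hIcc hx)).neg)
    (by simpa using hy3)
    (fun w hw hw0 => by
      have hfw : f w = 0 := by simpa [neg_eq_zero] using hw0
      have hwIoo : w ∈ Ioo p q :=
        ⟨lt_of_lt_of_le (lt_trans h₁.1 hy1) hw.1.le, lt_of_le_of_lt hw.2 h₂.2⟩
      simpa using neg_neg_of_pos (hz w hwIoo hfw))
    z₂ ⟨le_of_lt hy2, le_refl z₂⟩
  simp only [e₂, neg_zero] at hfinal
  exact lt_irrefl 0 hfinal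

/-- Interlacing of the zeros of `J_{k+2}`, `J_{k+3}` with those of `J_k` between consecutive
zeros of `J_{k+1}`, in the case `c < 2√((k+1)(k+2))`. -/
theorem besselJ_interlacing_small (k : ℝ) (hk : -1 < k) (a b : ℝ)
    (ha : 0 < a) (hab : a < b)
    (hza : besselJ (k + 1) a = 0) (hzb : besselJ (k + 1) b = 0)
    (hne : ∀ r ∈ Set.Ioo a b, besselJ (k + 1) r ≠ 0)
    (c : ℝ) (hc : c ∈ Set.Ioo a b) (hzc : besselJ k c = 0)
    (hcr : c < 2 * Real.sqrt ((k + 1) * (k + 2))) :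
    (∃! d, d ∈ Set.Ioo a b ∧ besselJ (k + 2) d = 0) ∧
    (∃! e, e ∈ Set.Ioo a b ∧ besselJ (k + 3) e = 0) ∧
    ∀ d e, d ∈ Set.Ioo a b → besselJ (k + 2) d = 0 →
      e ∈ Set.Ioo a b → besselJ (k + 3) e = 0 →
        a < d ∧ d < e ∧ e < c ∧ c < b := by
  obtain ⟨hac, hcb⟩ := hc
  have hb0 : 0 < b := lt_trans ha hab
  have hc0 : 0 < c := lt_trans ha hac
  have hk1 : -1 < k + 1 := by linarith
  have hk2 : -1 < k + 2 := by linarith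
  have hxpos : ∀ x ∈ Icc a b, 0 < x := fun x hx => lt_of_lt_of_le ha hx.1
  -- derivative data
  set D1 : ℝ → ℝ := fun x => besselJ k x - (k+1)/x * besselJ (k+1) x with hD1
  set D2 : ℝ → ℝ := fun x => besselJ (k+1) x - (k+2)/x * besselJ (k+2) x with hD2
  set D3 : ℝ → ℝ := fun x => besselJ (k+2) x - (k+3)/x * besselJ (k+3) x with hD3
  have hd1 : ∀ x ∈ Icc a b, HasDerivAt (besselJ (k+1)) (D1 x) x := fun x hx =>
    besselJ_hasDerivAt_succ hk (hxpos x hx)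
  have hd2 : ∀ x ∈ Icc a b, HasDerivAt (besselJ (k+2)) (D2 x) x := fun x hx => by
    have := besselJ_hasDerivAt_succ hk1 (hxpos x hx)
    rw [show k+1+1 = k+2 by ring] at this
    exact this
  have hd3 : ∀ x ∈ Icc a b, HasDerivAt (besselJ (k+3)) (D3 x) x := fun x hx => by
    have := besselJ_hasDerivAt_succ hk2 (hxpos x hx)
    rw [show k+2+1 = k+3 by ring] at this
    exact this
  have hrec2 : ∀ x ∈ Icc a b, besselJ k x + besselJ (k+2) x
      = 2*(k+1)/x * besselJ (k+1) x := fun x hx => besselJ_recurrence hk (hxpos x hx)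
  have hrec3 : ∀ x ∈ Icc a b, besselJ (k+1) x + besselJ (k+3) x
      = 2*(k+2)/x * besselJ (k+2) x := fun x hx => by
    have := besselJ_recurrence hk1 (hxpos x hx)
    rw [show k+1+2 = k+3 by ring, show k+1+1 = k+2 by ring] at this
    linarith [this]
  -- continuity
  have hcont1 : ContinuousOn (besselJ (k+1)) (Icc a b) := fun x hx =>
    (hd1 x hx).continuousAt.continuousWithinAt
  -- sign dichotomy for J_{k+1} on (a,b)
  have hsgn : ∀ x ∈ Ioo a b, ∀ y ∈ Ioo a b,
      besselJ (k+1) x < 0 → 0 < besselJ (k+1) y → False := by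
    intro x hx y hy hxn hyp
    rcases lt_trichotomy x y with h | h | h
    · obtain ⟨z, hz, hz0⟩ := intermediate_value_Ioo (le_of_lt h)
        (hcont1.mono (Icc_subset_Icc (le_of_lt hx.1) (le_of_lt hy.2)))
        (show (0:ℝ) ∈ Ioo (besselJ (k+1) x) (besselJ (k+1) y) from ⟨hxn, hyp⟩)
      exact hne z ⟨lt_trans hx.1 hz.1, lt_trans hz.2 hy.2⟩ hz0
    · rw [h] at hxn; linarith
    · obtain ⟨z, hz, hz0⟩ := intermediate_value_Ioo' (le_of_lt h)
        (hcont1.mono (Icc_subset_Icc (le_of_lt hy.1) (le_of_lt hx.2)))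
        (show (0:ℝ) ∈ Ioo (besselJ (k+1) x) (besselJ (k+1) y) from ⟨hxn, hyp⟩)
      exact hne z ⟨lt_trans hy.1 hz.1, lt_trans hz.2 hx.2⟩ hz0
  obtain ⟨ε, hεne, hεJ⟩ : ∃ ε : ℝ, (ε = 1 ∨ ε = -1) ∧
      ∀ x ∈ Ioo a b, 0 < ε * besselJ (k+1) x := by
    have hx₀ : (a+b)/2 ∈ Ioo a b := ⟨by linarith, by linarith⟩
    rcases lt_or_gt_of_ne (hne _ hx₀) with hneg | hpos'
    · refine ⟨-1, Or.inr rfl, fun x hx => ?_⟩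
      rcases lt_trichotomy (besselJ (k+1) x) 0 with h | h | h
      · linarith
      · exact absurd h (hne x hx)
      · exact absurd (hsgn _ hx₀ x hx hneg h) id
    · refine ⟨1, Or.inl rfl, fun x hx => ?_⟩
      rcases lt_trichotomy (besselJ (k+1) x) 0 with h | h | h
      · exact absurd (hsgn x hx _ hx₀ h hpos') id
      · exact absurd h (hne x hx)
      · linarith
  have hε0 : ε ≠ 0 := by rcases hεne with h | h <;> rw [h] <;> norm_num
  have hε2 : ε * ε = 1 := by rcases hεne with h | h <;> rw [h] <;> norm_num
  -- scaled functions
  set F1 : ℝ → ℝ := fun x => ε * besselJ (k+1) x with hF1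
  set F2 : ℝ → ℝ := fun x => ε * besselJ (k+2) x with hF2
  set F3 : ℝ → ℝ := fun x => ε * besselJ (k+3) x with hF3
  have hFd1 : ∀ x ∈ Icc a b, HasDerivAt F1 (ε * D1 x) x := fun x hx =>
    (hd1 x hx).const_mul ε
  have hFd2 : ∀ x ∈ Icc a b, HasDerivAt F2 (ε * D2 x) x := fun x hx =>
    (hd2 x hx).const_mul ε
  have hFd3 : ∀ x ∈ Icc a b, HasDerivAt F3 (ε * D3 x) x := fun x hx =>
    (hd3 x hx).const_mul ε
  have hcF2 : ContinuousOn F2 (Icc a b) := fun x hx =>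
    (hFd2 x hx).continuousAt.continuousWithinAt
  have hcF3 : ContinuousOn F3 (Icc a b) := fun x hx =>
    (hFd3 x hx).continuousAt.continuousWithinAt
  have haI : a ∈ Icc a b := ⟨le_refl a, le_of_lt hab⟩
  have hbI : b ∈ Icc a b := ⟨le_of_lt hab, le_refl b⟩
  have hcI : c ∈ Icc a b := ⟨le_of_lt hac, le_of_lt hcb⟩
  have hF1a : F1 a = 0 := by rw [hF1]; simp [hza]
  have hF1b : F1 b = 0 := by rw [hF1]; simp [hzb]
  -- sign of J_k at a and b
  have hF0a : 0 < ε * besselJ k a := by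
    have hnn : 0 ≤ ε * D1 a := by
      apply deriv_nonneg_right hab (hFd1 a haI) hF1a hεJ
    have hval : ε * D1 a = ε * besselJ k a := by
      rw [hD1]; simp only []; rw [hza]; ring
    rw [hval] at hnn
    rcases eq_or_lt_of_le hnn with h | h
    · exfalso
      have : besselJ k a = 0 := by
        rcases mul_eq_zero.mp h.symm with h' | h'
        · exact absurd h' hε0
        · exact h'
      exact besselJ_no_common_zero hk ha this hza
    · exact h
  have hF0b : ε * besselJ k b < 0 := by
    have hnn : ε * D1 b ≤ 0 := by
      apply deriv_nonpos_left hab (hFd1 b hbI) hF1b hεJ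
    have hval : ε * D1 b = ε * besselJ k b := by
      rw [hD1]; simp only []; rw [hzb]; ring
    rw [hval] at hnn
    rcases eq_or_lt_of_le hnn with h | h
    · exfalso
      have : besselJ k b = 0 := by
        rcases mul_eq_zero.mp h with h' | h'
        · exact absurd h' hε0
        · exact h'
      exact besselJ_no_common_zero hk hb0 this hzb
    · exact h
  -- values of F2, F3 at the key points
  have hF2a : F2 a < 0 := by
    have h := hrec2 a haI
    rw [hza, mul_zero] at h
    have : besselJ (k+2) a = - besselJ k a := by linarith
    rw [hF2]; simp only []; rw [this]; linarith [hF0a]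
  have hF2b : 0 < F2 b := by
    have h := hrec2 b hbI
    rw [hzb, mul_zero] at h
    have : besselJ (k+2) b = - besselJ k b := by linarith
    rw [hF2]; simp only []; rw [this]; linarith [hF0b]
  have hJ2c : besselJ (k+2) c = 2*(k+1)/c * besselJ (k+1) c := by
    have h := hrec2 c hcI
    rw [hzc] at h
    linarith
  have hF2c : 0 < F2 c := by
    rw [hF2]; simp only []; rw [hJ2c]
    have := hεJ c ⟨hac, hcb⟩
    have h1 : ε * (2*(k+1)/c * besselJ (k+1) c) = 2*(k+1)/c * (ε * besselJ (k+1) c) := by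
      ring
    rw [h1]
    exact mul_pos (div_pos (by linarith) hc0) this
  have hDpos : (0:ℝ) < (k+1)*(k+2) := by nlinarith
  have hcsq : c^2 < 4*((k+1)*(k+2)) := by
    have h1 := Real.sq_sqrt (le_of_lt hDpos)
    nlinarith [Real.sqrt_nonneg ((k+1)*(k+2))]
  have hF3a : F3 a < 0 := by
    have h := hrec3 a haI
    rw [hza, zero_add] at h
    rw [hF3]; simp only []; rw [h]
    have h1 : ε * (2*(k+2)/a * besselJ (k+2) a) = 2*(k+2)/a * F2 a := by
      rw [hF2]; ring
    rw [h1]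
    exact mul_neg_of_pos_of_neg (div_pos (by linarith) ha) hF2a
  have hF3c : 0 < F3 c := by
    have h := hrec3 c hcI
    have h3 : besselJ (k+3) c = 2*(k+2)/c * besselJ (k+2) c - besselJ (k+1) c := by
      linarith
    rw [hF3]; simp only []; rw [h3, hJ2c]
    have hJ1c := hεJ c ⟨hac, hcb⟩
    have heq : ε * (2*(k+2)/c * (2*(k+1)/c * besselJ (k+1) c) - besselJ (k+1) c)
        = (4*((k+1)*(k+2)) - c^2)/c^2 * (ε * besselJ (k+1) c) := by
      field_simp
      ring
    rw [heq]
    apply mul_pos _ hJ1c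
    apply div_pos (by linarith) (by positivity)
  -- existence of d
  obtain ⟨d, hdIoo_ac, hF2d⟩ := intermediate_value_Ioo (le_of_lt hac)
    (hcF2.mono (Icc_subset_Icc (le_refl a) (le_of_lt hcb)))
    (show (0:ℝ) ∈ Ioo (F2 a) (F2 c) from ⟨hF2a, hF2c⟩)
  have hdIoo : d ∈ Ioo a b := ⟨hdIoo_ac.1, lt_trans hdIoo_ac.2 hcb⟩
  have hJ2d : besselJ (k+2) d = 0 := by
    rcases mul_eq_zero.mp hF2d with h | h
    · exact absurd h hε0
    · exact h
  -- uniqueness of zeros of F2 on (a,b)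
  have huniq2 : ∀ z₁ ∈ Ioo a b, ∀ z₂ ∈ Ioo a b, F2 z₁ = 0 → F2 z₂ = 0 → z₁ = z₂ := by
    apply at_most_one_zero hFd2
    intro z hz hz0
    have hJ2z : besselJ (k+2) z = 0 := by
      rcases mul_eq_zero.mp hz0 with h | h
      · exact absurd h hε0
      · exact h
    have : ε * D2 z = ε * besselJ (k+1) z := by
      rw [hD2]; simp only []; rw [hJ2z]; ring
    rw [this]
    exact hεJ z hz
  -- sign of F2 on both sides of d
  have hF2neg : ∀ z ∈ Ioo a d, F2 z < 0 := by
    intro z hz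
    have hzb' : z < b := lt_trans hz.2 hdIoo.2
    by_contra hcon
    push_neg at hcon
    rcases eq_or_lt_of_le hcon with h | h
    · have := huniq2 z ⟨hz.1, hzb'⟩ d hdIoo h.symm hF2d
      rw [this] at hz; exact lt_irrefl d hz.2
    · obtain ⟨w, hw, hw0⟩ := intermediate_value_Ioo (le_of_lt hz.1)
        (hcF2.mono (Icc_subset_Icc (le_refl a) (le_of_lt hzb')))
        (show (0:ℝ) ∈ Ioo (F2 a) (F2 z) from ⟨hF2a, h⟩)
      have hwIoo : w ∈ Ioo a b := ⟨hw.1, lt_trans hw.2 hzb'⟩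
      have := huniq2 w hwIoo d hdIoo hw0 hF2d
      rw [this] at hw
      exact lt_irrefl d (lt_trans hw.2 hz.2)
  have hF2pos : ∀ z ∈ Ioo d b, 0 < F2 z := by
    intro z hz
    have hza' : a < z := lt_trans hdIoo.1 hz.1
    by_contra hcon
    push_neg at hcon
    rcases eq_or_lt_of_le hcon with h | h
    · have := huniq2 z ⟨hza', hz.2⟩ d hdIoo h hF2d
      rw [this] at hz; exact lt_irrefl d hz.1
    · obtain ⟨w, hw, hw0⟩ := intermediate_value_Ioo (le_of_lt hz.2)
        (hcF2.mono (Icc_subset_Icc (le_of_lt hza') (le_refl b)))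
        (show (0:ℝ) ∈ Ioo (F2 z) (F2 b) from ⟨h, hF2b⟩)
      have hwIoo : w ∈ Ioo a b := ⟨lt_trans hza' hw.1, hw.2⟩
      have := huniq2 w hwIoo d hdIoo hw0 hF2d
      rw [this] at hw
      exact lt_irrefl d (lt_trans hz.1 hw.1)
  -- F3 at d
  have hdI : d ∈ Icc a b := ⟨le_of_lt hdIoo.1, le_of_lt hdIoo.2⟩
  have hF3d : F3 d < 0 := by
    have h := hrec3 d hdI
    rw [hJ2d, mul_zero] at h
    have : besselJ (k+3) d = - besselJ (k+1) d := by linarith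
    rw [hF3]; simp only []; rw [this]
    have := hεJ d hdIoo
    linarith [this]
  -- existence of e
  obtain ⟨e, heIoo_dc, hF3e⟩ := intermediate_value_Ioo (le_of_lt hdIoo_ac.2)
    (hcF3.mono (Icc_subset_Icc (le_of_lt hdIoo.1) (le_of_lt hcb)))
    (show (0:ℝ) ∈ Ioo (F3 d) (F3 c) from ⟨hF3d, hF3c⟩)
  have heIoo : e ∈ Ioo a b :=
    ⟨lt_trans hdIoo.1 heIoo_dc.1, lt_trans heIoo_dc.2 hcb⟩
  have hJ3e : besselJ (k+3) e = 0 := by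
    rcases mul_eq_zero.mp hF3e with h | h
    · exact absurd h hε0
    · exact h
  -- no zeros of F3 in (a, d]
  have hF3negIcc : ∀ x ∈ Icc a d, F3 x < 0 := by
    apply neg_on_Icc hdIoo.1 (fun x hx => hFd3 x ⟨hx.1, le_trans hx.2 hdI.2⟩) hF3a
    intro z hz hz0
    rcases eq_or_lt_of_le hz.2 with h | h
    · exfalso; rw [h] at hz0; rw [hz0] at hF3d; exact lt_irrefl 0 hF3d
    · have hJ3z : besselJ (k+3) z = 0 := by
        rcases mul_eq_zero.mp hz0 with h' | h'
        · exact absurd h' hε0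
        · exact h'
      have hval : ε * D3 z = F2 z := by
        rw [hD3, hF2]; simp only []; rw [hJ3z]; ring
      rw [hval]
      exact hF2neg z ⟨hz.1, h⟩
  -- uniqueness of zeros of F3 on (d,b)
  have huniq3 : ∀ z₁ ∈ Ioo d b, ∀ z₂ ∈ Ioo d b, F3 z₁ = 0 → F3 z₂ = 0 → z₁ = z₂ := by
    apply at_most_one_zero (fun x hx => hFd3 x ⟨le_trans hdI.1 hx.1, hx.2⟩)
    intro z hz hz0
    have hJ3z : besselJ (k+3) z = 0 := by
      rcases mul_eq_zero.mp hz0 with h' | h'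
      · exact absurd h' hε0
      · exact h'
    have hval : ε * D3 z = F2 z := by
      rw [hD3, hF2]; simp only []; rw [hJ3z]; ring
    rw [hval]
    exact hF2pos z hz
  -- global uniqueness of zeros of F3 on (a,b)
  have huniq3' : ∀ z ∈ Ioo a b, F3 z = 0 → z = e := by
    intro z hz hz0
    have hdz : d < z := by
      by_contra hcon
      push_neg at hcon
      have := hF3negIcc z ⟨le_of_lt hz.1, hcon⟩
      rw [hz0] at this
      exact lt_irrefl 0 this
    exact huniq3 z ⟨hdz, hz.2⟩ e ⟨heIoo_dc.1, heIoo.2⟩ hz0 hF3e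
  -- conversions between besselJ zeros and F zeros
  have hF2zero : ∀ y, besselJ (k+2) y = 0 → F2 y = 0 := by
    intro y hy; rw [hF2]; simp only []; rw [hy, mul_zero]
  have hF3zero : ∀ y, besselJ (k+3) y = 0 → F3 y = 0 := by
    intro y hy; rw [hF3]; simp only []; rw [hy, mul_zero]
  -- assemble
  refine ⟨⟨d, ⟨hdIoo, hJ2d⟩, ?_⟩, ⟨e, ⟨heIoo, hJ3e⟩, ?_⟩, ?_⟩
  · rintro y ⟨hy, hy0⟩
    exact huniq2 y hy d hdIoo (hF2zero y hy0) hF2d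
  · rintro y ⟨hy, hy0⟩
    exact huniq3' y hy (hF3zero y hy0)
  · intro d' e' hd' hJ2d' he' hJ3e'
    have hdd : d' = d := huniq2 d' hd' d hdIoo (hF2zero d' hJ2d') hF2d
    have hee : e' = e := huniq3' e' he' (hF3zero e' hJ3e')
    rw [hdd, hee]
    exact ⟨hdIoo.1, heIoo_dc.1, heIoo_dc.2, hcb⟩
end

section
/- Fix a real k > −1 and let a < b be consecutive positive zeros of J_{k+1} with b < 2·√((k+2)(k+3)). Let c ∈ (a,b) satisfy J_k(c) = 0 and let e ∈ (a,b) satisfy J_{k+3}(e) = 0. Then there exists a unique f ∈ (a,b) with J_{k+4}(f) = 0, and moreover: f ∈ (e, c) if c < √(2(k+1)(k+3)); f ∈ (c, b) if √(2(k+1)(k+3)) < c < 2·√((k+1)(k+2)); and f ∈ (e, b) if c > 2·√((k+1)(k+2)). -/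
open Real

namespace BesselAux

noncomputable def bc (ν : ℝ) (m : ℕ) : ℝ := (-1) ^ m / (m.factorial * Real.Gamma (m + ν + 1))

noncomputable def g (ν x : ℝ) : ℝ := ∑' m : ℕ, bc ν m * x ^ m

lemma gamma_arg_pos {ν : ℝ} (hν : -1 < ν) (m : ℕ) : 0 < (m : ℝ) + ν + 1 := by
  have : (0:ℝ) ≤ m := Nat.cast_nonneg m
  linarith

lemma bc_pos_den {ν : ℝ} (hν : -1 < ν) (m : ℕ) :
    0 < (m.factorial : ℝ) * Real.Gamma (m + ν + 1) := by
  have h1 : 0 < (m.factorial : ℝ) := by exact_mod_cast m.factorial_pos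
  exact mul_pos h1 (Real.Gamma_pos_of_pos (gamma_arg_pos hν m))

lemma bc_ne_zero {ν : ℝ} (hν : -1 < ν) (m : ℕ) : bc ν m ≠ 0 := by
  unfold bc
  exact div_ne_zero (by positivity) (ne_of_gt (bc_pos_den hν m))

lemma abs_bc {ν : ℝ} (hν : -1 < ν) (m : ℕ) :
    |bc ν m| = 1 / (m.factorial * Real.Gamma (m + ν + 1)) := by
  unfold bc
  rw [abs_div, abs_pow, abs_neg, abs_one, one_pow, abs_of_pos (bc_pos_den hν m)]

lemma bc_succ {ν : ℝ} (hν : -1 < ν) (m : ℕ) :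
    bc ν (m + 1) = -bc ν m / ((m + 1) * (m + ν + 1)) := by
  have hg : Real.Gamma ((m:ℝ) + ν + 1 + 1) = ((m:ℝ) + ν + 1) * Real.Gamma ((m:ℝ) + ν + 1) :=
    Real.Gamma_add_one (ne_of_gt (gamma_arg_pos hν m))
  unfold bc
  rw [pow_succ]
  have hfac : ((m+1).factorial : ℝ) = (m + 1) * m.factorial := by
    push_cast [Nat.factorial_succ]; ring
  have harg : ((m:ℝ)+1) + ν + 1 = (m:ℝ) + ν + 1 + 1 := by ring
  push_cast
  rw [harg, hg, hfac]
  have h1 : (m.factorial : ℝ) ≠ 0 := by exact_mod_cast m.factorial_pos.ne'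
  have h2 : Real.Gamma ((m:ℝ) + ν + 1) ≠ 0 := (Real.Gamma_pos_of_pos (gamma_arg_pos hν m)).ne'
  have h3 : ((m:ℝ) + 1) ≠ 0 := by positivity
  have h4 : ((m:ℝ) + ν + 1) ≠ 0 := (gamma_arg_pos hν m).ne'
  field_simp

/-- master summability -/
lemma summable_master {ν : ℝ} (hν : -1 < ν) {R : ℝ} (hR : 0 ≤ R) :
    Summable (fun m : ℕ => ((m:ℝ) + 1) * |bc ν m| * R ^ m) := by
  apply summable_of_ratio_norm_eventually_le (r := 1/2) (by norm_num)
  have hev : ∀ᶠ m : ℕ in Filter.atTop, (4 * R + 4 : ℝ) ≤ (m : ℝ) :=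
    (tendsto_natCast_atTop_atTop (R := ℝ)).eventually_ge_atTop _
  filter_upwards [hev] with m hm
  have harg := gamma_arg_pos hν m
  have hm0 : (0:ℝ) < (m:ℝ) + 1 := by positivity
  have hden : (0:ℝ) < ((m:ℝ) + 1) * ((m:ℝ) + ν + 1) := mul_pos hm0 harg
  have hB : (0:ℝ) ≤ |bc ν m| * R ^ m := mul_nonneg (abs_nonneg _) (pow_nonneg hR m)
  have h1 : ‖(((m+1:ℕ):ℝ) + 1) * |bc ν (m+1)| * R ^ (m+1)‖
      = ((m:ℝ) + 2) * |bc ν (m+1)| * R ^ (m+1) := by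
    rw [Real.norm_eq_abs, abs_of_nonneg (by positivity)]; push_cast; ring
  have h2 : ‖((m:ℝ) + 1) * |bc ν m| * R ^ m‖ = ((m:ℝ) + 1) * |bc ν m| * R ^ m := by
    rw [Real.norm_eq_abs, abs_of_nonneg (by positivity)]
  rw [h1, h2]
  have habs : |bc ν (m+1)| = |bc ν m| / (((m:ℝ) + 1) * ((m:ℝ) + ν + 1)) := by
    rw [bc_succ hν m, abs_div, abs_neg, abs_of_pos hden]
  rw [habs]
  have key : ((m:ℝ) + 2) * R * 2 ≤ ((m:ℝ) + 1) * ((m:ℝ) + ν + 1) := by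
    nlinarith [hm, hR, hν]
  have step : ((m:ℝ) + 2) * (|bc ν m| / (((m:ℝ) + 1) * ((m:ℝ) + ν + 1))) * R ^ (m+1)
      = (((m:ℝ) + 2) * R * (|bc ν m| * R ^ m)) / (((m:ℝ) + 1) * ((m:ℝ) + ν + 1)) := by
    rw [pow_succ]; field_simp
  rw [step, div_le_iff₀ hden]
  nlinarith [mul_le_mul_of_nonneg_right key hB, mul_nonneg hden.le hB, hm0, hB, hden]


lemma summable_aux {ν : ℝ} (hν : -1 < ν) {R : ℝ} (hR : 1 ≤ R)
    (h : ℕ → ℝ) (hh : ∀ n, ‖h n‖ ≤ (n:ℝ) * |bc ν n| * R ^ (n-1)) : Summable h := by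
  apply Summable.of_norm_bounded (summable_master hν (le_trans zero_le_one hR))
  intro n
  refine le_trans (hh n) ?_
  have h1 : (0:ℝ) ≤ |bc ν n| := abs_nonneg _
  have h2 : R ^ (n-1) ≤ R ^ n := pow_le_pow_right₀ hR (Nat.sub_le n 1)
  have h3 : (n:ℝ) ≤ (n:ℝ) + 1 := by linarith
  have h0 : (0:ℝ) ≤ (n:ℝ) := Nat.cast_nonneg n
  have hRn : (0:ℝ) ≤ R ^ n := pow_nonneg (by linarith) n
  calc (n:ℝ) * |bc ν n| * R ^ (n-1) ≤ (n:ℝ) * |bc ν n| * R ^ n :=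
        mul_le_mul_of_nonneg_left h2 (mul_nonneg h0 h1)
    _ ≤ ((n:ℝ) + 1) * |bc ν n| * R ^ n := by nlinarith [mul_nonneg h1 hRn]

lemma summable_bc_pow {ν : ℝ} (hν : -1 < ν) (x : ℝ) :
    Summable (fun m : ℕ => bc ν m * x ^ m) := by
  apply Summable.of_norm_bounded (summable_master hν (abs_nonneg x))
  intro n
  rw [Real.norm_eq_abs, abs_mul, abs_pow]
  have : (0:ℝ) ≤ |bc ν n| * |x| ^ n := by positivity
  nlinarith [abs_nonneg (bc ν n), pow_nonneg (abs_nonneg x) n]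

lemma bc_shift {ν : ℝ} (hν : -1 < ν) (n : ℕ) :
    ((n:ℝ) + 1) * bc ν (n + 1) = -bc (ν + 1) n := by
  unfold bc
  have hfac : (((n+1).factorial) : ℝ) = ((n:ℝ) + 1) * n.factorial := by
    push_cast [Nat.factorial_succ]; ring
  have harg : ((n+1:ℕ):ℝ) + ν + 1 = (n:ℝ) + (ν + 1) + 1 := by push_cast; ring
  rw [hfac, harg, pow_succ]
  have h1 : ((n.factorial):ℝ) ≠ 0 := by exact_mod_cast n.factorial_pos.ne'
  have h2 : Real.Gamma ((n:ℝ) + (ν+1) + 1) ≠ 0 := by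
    refine (Real.Gamma_pos_of_pos ?_).ne'
    have : (0:ℝ) ≤ n := Nat.cast_nonneg n
    linarith
  have h3 : ((n:ℝ) + 1) ≠ 0 := by positivity
  field_simp

lemma g_hasDerivAt {ν : ℝ} (hν : -1 < ν) (x : ℝ) :
    HasDerivAt (g ν) (-g (ν + 1) x) x := by
  set R : ℝ := |x| + 1 with hR
  have hR1 : 1 ≤ R := by rw [hR]; linarith [abs_nonneg x]
  have hsum' : Summable (fun n : ℕ => (n:ℝ) * |bc ν n| * R ^ (n-1)) := by
    apply summable_aux hν hR1
    intro n
    rw [Real.norm_eq_abs, abs_of_nonneg (by positivity)]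
  have key : HasDerivAt (fun z => ∑' n : ℕ, bc ν n * z ^ n)
      (∑' n : ℕ, bc ν n * ((n:ℝ) * x ^ (n-1))) x := by
    apply hasDerivAt_tsum_of_isPreconnected hsum' Metric.isOpen_ball
      (convex_ball (0:ℝ) R).isPreconnected
      (g := fun n z => bc ν n * z ^ n) (g' := fun n y => bc ν n * ((n:ℝ) * y ^ (n-1)))
      (y₀ := 0)
    · intro n y _
      exact (hasDerivAt_pow n y).const_mul (bc ν n)
    · intro n y hy
      rw [mem_ball_zero_iff, Real.norm_eq_abs] at hy
      rw [Real.norm_eq_abs, abs_mul, abs_mul, abs_pow]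
      have h1 : |y| ^ (n-1) ≤ R ^ (n-1) := pow_le_pow_left₀ (abs_nonneg y) hy.le _
      have h2 : |(n:ℝ)| = (n:ℝ) := abs_of_nonneg (Nat.cast_nonneg n)
      rw [h2]
      have := abs_nonneg (bc ν n)
      have h3 : (0:ℝ) ≤ (n:ℝ) := Nat.cast_nonneg n
      calc |bc ν n| * ((n:ℝ) * |y| ^ (n-1)) ≤ |bc ν n| * ((n:ℝ) * R ^ (n-1)) := by
            apply mul_le_mul_of_nonneg_left ?_ this
            exact mul_le_mul_of_nonneg_left h1 h3
        _ = (n:ℝ) * |bc ν n| * R ^ (n-1) := by ring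
    · rw [mem_ball_zero_iff]
      simp only [norm_zero]
      have := abs_nonneg x
      simp only [hR]; linarith
    · exact summable_bc_pow hν 0
    · rw [mem_ball_zero_iff, Real.norm_eq_abs]
      simp only [hR]; linarith
  have hsd : Summable (fun n : ℕ => bc ν n * ((n:ℝ) * x ^ (n-1))) := by
    apply summable_aux hν hR1
    intro n
    rw [Real.norm_eq_abs, abs_mul, abs_mul, abs_pow, abs_of_nonneg (Nat.cast_nonneg n : (0:ℝ) ≤ n)]
    have h1 : |x| ^ (n-1) ≤ R ^ (n-1) := pow_le_pow_left₀ (abs_nonneg x) (by rw [hR]; linarith) _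
    have h3 : (0:ℝ) ≤ (n:ℝ) := Nat.cast_nonneg n
    have hb := abs_nonneg (bc ν n)
    calc |bc ν n| * ((n:ℝ) * |x| ^ (n-1)) ≤ |bc ν n| * ((n:ℝ) * R ^ (n-1)) :=
          mul_le_mul_of_nonneg_left (mul_le_mul_of_nonneg_left h1 h3) hb
      _ = (n:ℝ) * |bc ν n| * R ^ (n-1) := by ring
  have heq : (∑' n : ℕ, bc ν n * ((n:ℝ) * x ^ (n-1))) = -g (ν + 1) x := by
    rw [Summable.tsum_eq_zero_add hsd]
    simp only [Nat.cast_zero, zero_mul, mul_zero, zero_add]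
    have : ∀ n : ℕ, bc ν (n+1) * (((n+1:ℕ):ℝ) * x ^ ((n+1)-1)) = -(bc (ν+1) n * x ^ n) := by
      intro n
      have h := bc_shift hν n
      have : ((n+1:ℕ):ℝ) = (n:ℝ) + 1 := by push_cast; ring
      rw [this, Nat.add_sub_cancel]
      linear_combination x ^ n * h
    rw [tsum_congr this, tsum_neg]
    rfl
  rw [heq] at key
  exact key


lemma bc_down {μ : ℝ} (hμ : -1 < μ) (m : ℕ) : bc μ m = ((m:ℝ) + μ + 1) * bc (μ + 1) m := by
  unfold bc
  have harg : (m:ℝ) + (μ + 1) + 1 = ((m:ℝ) + μ + 1) + 1 := by ring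
  rw [harg, Real.Gamma_add_one (gamma_arg_pos hμ m).ne']
  have h1 : ((m.factorial):ℝ) ≠ 0 := by exact_mod_cast m.factorial_pos.ne'
  have h2 : Real.Gamma ((m:ℝ) + μ + 1) ≠ 0 := (Real.Gamma_pos_of_pos (gamma_arg_pos hμ m)).ne'
  have h3 : ((m:ℝ) + μ + 1) ≠ 0 := (gamma_arg_pos hμ m).ne'
  field_simp

lemma g_rec {μ : ℝ} (hμ : -1 < μ) (x : ℝ) :
    g μ x = (μ + 1) * g (μ + 1) x - x * g (μ + 2) x := by
  have hμ1 : -1 < μ + 1 := by linarith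
  have hs1 := summable_bc_pow hμ x
  have hs2 := summable_bc_pow hμ1 x
  have hsm : Summable (fun m : ℕ => (m:ℝ) * bc (μ + 1) m * x ^ m) := by
    apply Summable.of_norm_bounded (summable_master hμ1 (abs_nonneg x))
    intro n
    rw [Real.norm_eq_abs, abs_mul, abs_mul, abs_pow,
      abs_of_nonneg (Nat.cast_nonneg n : (0:ℝ) ≤ (n:ℝ))]
    have hb := abs_nonneg (bc (μ+1) n)
    have hx := pow_nonneg (abs_nonneg x) n
    nlinarith [mul_nonneg hb hx]
  have key : (μ + 1) * g (μ + 1) x - g μ x = x * g (μ + 2) x := by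
    have l1 : (μ + 1) * g (μ + 1) x - g μ x = ∑' m : ℕ, -((m:ℝ) * bc (μ + 1) m * x ^ m) := by
      unfold g
      rw [← tsum_mul_left, ← Summable.tsum_sub (hs2.mul_left _) hs1]
      apply tsum_congr; intro m
      rw [bc_down hμ m]; ring
    have l2 : x * g (μ + 2) x = ∑' m : ℕ, bc (μ + 2) m * x ^ (m + 1) := by
      unfold g
      rw [← tsum_mul_left]
      apply tsum_congr; intro m; ring
    rw [l1, l2, Summable.tsum_eq_zero_add hsm.neg]
    simp only [Nat.cast_zero, zero_mul, neg_zero, zero_add]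
    apply tsum_congr; intro m
    have h := bc_shift hμ1 m
    have harg : μ + 1 + 1 = μ + 2 := by ring
    rw [harg] at h
    push_cast
    linear_combination (-(x ^ (m + 1))) * h
  linarith [key]

lemma besselJ_eq {ν : ℝ} {r : ℝ} (hr : 0 < r) :
    besselJ ν r = (r / 2) ^ ν * g ν ((r / 2) ^ 2) := by
  have h2 : (0:ℝ) < r / 2 := by linarith
  unfold besselJ g bc
  rw [← tsum_mul_left]
  apply tsum_congr; intro m
  have hexp : (r / 2) ^ ((2 * (m:ℝ)) + ν) = ((r / 2) ^ 2) ^ m * (r / 2) ^ ν := by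
    rw [Real.rpow_add h2]
    congr 1
    rw [show (2 * (m:ℝ)) = ((2 * m : ℕ) : ℝ) by push_cast; ring, Real.rpow_natCast, pow_mul]
  rw [hexp]; ring

lemma besselJ_rec {μ : ℝ} (hμ : -1 < μ) {r : ℝ} (hr : 0 < r) :
    besselJ (μ + 2) r = (2 * (μ + 1) / r) * besselJ (μ + 1) r - besselJ μ r := by
  have h2 : (0:ℝ) < r / 2 := by linarith
  rw [besselJ_eq hr, besselJ_eq hr, besselJ_eq hr]
  have hg := g_rec hμ ((r / 2) ^ 2)
  have e1 : (r / 2) ^ (μ + 2) = (r / 2) ^ μ * (r / 2) ^ (2:ℕ) := by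
    rw [Real.rpow_add h2, ← Real.rpow_natCast (r/2) 2]
    norm_num
  have e2 : (r / 2) ^ (μ + 1) = (r / 2) ^ μ * (r / 2) := by
    rw [Real.rpow_add h2, Real.rpow_one]
  rw [e1, e2, hg]
  field_simp
  ring


lemma inner_hasDerivAt (r : ℝ) : HasDerivAt (fun x : ℝ => ((x / 2) ^ 2 : ℝ)) (r / 2) r := by
  have h := ((hasDerivAt_id r).div_const 2).pow 2
  refine h.congr_deriv ?_
  simp
  ring

lemma rpow_cancel {x : ℝ} (hx : 0 < x) (ν : ℝ) : x ^ (-ν) * x ^ ν = 1 := by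
  rw [← Real.rpow_add hx]
  norm_num

lemma div_two_rpow {x : ℝ} (hx : 0 < x) (ν : ℝ) : (x / 2) ^ ν = x ^ ν * 2 ^ (-ν) := by
  rw [Real.div_rpow hx.le (by norm_num : (0:ℝ) ≤ 2), Real.rpow_neg (by norm_num : (0:ℝ) ≤ 2),
    div_eq_mul_inv]

lemma hasDerivAt_besselJ_down {ν : ℝ} (hν : -1 < ν) {r : ℝ} (hr : 0 < r) :
    HasDerivAt (fun x => x ^ (-ν) * besselJ ν x) (-(r ^ (-ν) * besselJ (ν + 1) r)) r := by
  have h2 : (0:ℝ) < r / 2 := by linarith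
  have hF : HasDerivAt (fun x : ℝ => (2:ℝ) ^ (-ν) * g ν ((x / 2) ^ 2))
      ((2:ℝ) ^ (-ν) * (-g (ν + 1) ((r / 2) ^ 2) * (r / 2))) r := by
    exact ((g_hasDerivAt hν ((r / 2) ^ 2)).comp r (inner_hasDerivAt r)).const_mul _
  have hEq : (fun x => x ^ (-ν) * besselJ ν x) =ᶠ[nhds r]
      (fun x : ℝ => (2:ℝ) ^ (-ν) * g ν ((x / 2) ^ 2)) := by
    filter_upwards [Ioi_mem_nhds hr] with x hx
    rw [besselJ_eq hx, div_two_rpow hx, ← mul_assoc, ← mul_assoc, rpow_cancel hx, one_mul]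
  have key := hF.congr_of_eventuallyEq hEq
  refine key.congr_deriv ?_
  symm
  rw [besselJ_eq hr, div_two_rpow hr]
  have e1 : (r:ℝ) ^ (ν + 1) = r ^ ν * r := by rw [Real.rpow_add hr, Real.rpow_one]
  rw [e1]
  have h3 := rpow_cancel hr ν
  have e2 : (2:ℝ) ^ (-(ν+1)) = 2 ^ (-ν) * 2⁻¹ := by
    rw [show -(ν+1) = -ν + (-1) by ring, Real.rpow_add (by norm_num : (0:ℝ) < 2)]
    norm_num
  rw [e2]
  linear_combination (-(r * (2:ℝ) ^ (-ν) * 2⁻¹ * g (ν + 1) ((r / 2) ^ 2))) * h3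

lemma hasDerivAt_besselJ_up {μ : ℝ} (hμ : -1 < μ) {r : ℝ} (hr : 0 < r) :
    HasDerivAt (fun x => x ^ (μ + 1) * besselJ (μ + 1) x) (r ^ (μ + 1) * besselJ μ r) r := by
  have h2 : (0:ℝ) < r / 2 := by linarith
  have hu : (0:ℝ) < (r / 2) ^ 2 := by positivity
  have hupow : HasDerivAt (fun x : ℝ => (((x / 2) ^ 2 : ℝ)) ^ (μ + 1))
      ((μ + 1) * ((r / 2) ^ 2) ^ (μ + 1 - 1) * (r / 2)) r :=
    HasDerivAt.comp (h₂ := fun y : ℝ => y ^ (μ + 1)) r (Real.hasDerivAt_rpow_const (p := μ + 1) (Or.inl hu.ne')) (inner_hasDerivAt r)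
  have hgc : HasDerivAt (fun x : ℝ => g (μ + 1) ((x / 2) ^ 2))
      (-g (μ + 2) ((r / 2) ^ 2) * (r / 2)) r := by
    have h := ((g_hasDerivAt (by linarith : -1 < μ + 1) ((r / 2) ^ 2)).comp r (inner_hasDerivAt r))
    refine h.congr_deriv ?_
    rw [show μ + 1 + 1 = μ + 2 by ring]
  have hF := ((hupow.mul hgc).const_mul ((2:ℝ) ^ (μ + 1)))
  have hEq : (fun x => x ^ (μ + 1) * besselJ (μ + 1) x) =ᶠ[nhds r]
      (fun x : ℝ => (2:ℝ) ^ (μ + 1) * ((((x / 2) ^ 2 : ℝ)) ^ (μ + 1) * g (μ + 1) ((x / 2) ^ 2))) := by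
    filter_upwards [Ioi_mem_nhds hr] with x hx
    have hx0 : (0:ℝ) < x := hx
    have hx2 : (0:ℝ) < x / 2 := by linarith
    rw [besselJ_eq hx0]
    have e : x ^ (μ + 1) * (x / 2) ^ (μ + 1) = (2:ℝ) ^ (μ + 1) * (((x / 2) ^ 2 : ℝ)) ^ (μ + 1) := by
      rw [← Real.mul_rpow hx0.le hx2.le, ← Real.mul_rpow (by norm_num : (0:ℝ) ≤ 2) (by positivity)]
      congr 1
      ring
    calc x ^ (μ + 1) * ((x / 2) ^ (μ + 1) * g (μ + 1) ((x / 2) ^ 2))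
        = (x ^ (μ + 1) * (x / 2) ^ (μ + 1)) * g (μ + 1) ((x / 2) ^ 2) := by ring
      _ = (2:ℝ) ^ (μ + 1) * ((((x / 2) ^ 2 : ℝ)) ^ (μ + 1) * g (μ + 1) ((x / 2) ^ 2)) := by
          rw [e]; ring
  have key := hF.congr_of_eventuallyEq hEq
  refine key.congr_deriv ?_
  symm
  rw [besselJ_eq hr, g_rec hμ ((r / 2) ^ 2)]
  have hμ11 : μ + 1 - 1 = μ := by ring
  rw [hμ11]
  have sq : ∀ s : ℝ, (((r / 2) ^ 2 : ℝ)) ^ s = ((r / 2) ^ s) ^ 2 := by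
    intro s
    rw [← Real.rpow_natCast (r / 2) 2, ← Real.rpow_mul h2.le, mul_comm,
      Real.rpow_mul h2.le, Real.rpow_natCast]
  have et : (r:ℝ) ^ (μ + 1) = 2 ^ (μ + 1) * (r / 2) ^ (μ + 1) := by
    rw [← Real.mul_rpow (by norm_num : (0:ℝ) ≤ 2) h2.le]
    congr 1
    ring
  have e1 : (r / 2) ^ (μ + 1) = (r / 2) ^ μ * (r / 2) := by
    rw [Real.rpow_add h2, Real.rpow_one]
  rw [sq μ, sq (μ + 1), et, e1]
  ring


lemma besselJ_contAt {ν : ℝ} (hν : -1 < ν) {r : ℝ} (hr : 0 < r) :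
    ContinuousAt (besselJ ν) r := by
  have hd := (hasDerivAt_besselJ_down hν hr).continuousAt
  have hp : ContinuousAt (fun x : ℝ => x ^ ν) r :=
    Real.continuousAt_rpow_const r ν (Or.inl hr.ne')
  have hEq : (fun x : ℝ => x ^ ν * (x ^ (-ν) * besselJ ν x)) =ᶠ[nhds r] besselJ ν := by
    filter_upwards [Ioi_mem_nhds hr] with x hx
    have hx0 : (0:ℝ) < x := hx
    rw [← mul_assoc, mul_comm (x ^ ν), rpow_cancel hx0 ν, one_mul]
  exact ContinuousAt.congr (hp.mul hd) hEq

lemma besselJ_contOn {ν : ℝ} (hν : -1 < ν) {p q : ℝ} (hp : 0 < p) :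
    ContinuousOn (besselJ ν) (Set.Icc p q) := fun x hx =>
  (besselJ_contAt hν (lt_of_lt_of_le hp hx.1)).continuousWithinAt

lemma mvt_up {μ : ℝ} (hμ : -1 < μ) {p q : ℝ} (hp : 0 < p) (hpq : p < q) :
    ∃ ξ ∈ Set.Ioo p q, q ^ (μ + 1) * besselJ (μ + 1) q - p ^ (μ + 1) * besselJ (μ + 1) p
      = (q - p) * (ξ ^ (μ + 1) * besselJ μ ξ) := by
  have hcont : ContinuousOn (fun x : ℝ => x ^ (μ + 1) * besselJ (μ + 1) x) (Set.Icc p q) := by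
    apply ContinuousOn.mul ?_ (besselJ_contOn (by linarith) hp)
    intro x hx
    exact (Real.continuousAt_rpow_const x (μ + 1)
      (Or.inl (lt_of_lt_of_le hp hx.1).ne')).continuousWithinAt
  have hder : ∀ x ∈ Set.Ioo p q,
      HasDerivAt (fun x : ℝ => x ^ (μ + 1) * besselJ (μ + 1) x) (x ^ (μ + 1) * besselJ μ x) x :=
    fun x hx => hasDerivAt_besselJ_up hμ (lt_trans hp hx.1)
  obtain ⟨ξ, hξ, heq⟩ := exists_hasDerivAt_eq_slope
    (fun x : ℝ => x ^ (μ + 1) * besselJ (μ + 1) x)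
    (fun x : ℝ => x ^ (μ + 1) * besselJ μ x) hpq hcont hder
  refine ⟨ξ, hξ, ?_⟩
  rw [eq_div_iff (sub_ne_zero.mpr hpq.ne')] at heq
  linarith [heq]

lemma mvt_down {μ : ℝ} (hμ : -1 < μ) {p q : ℝ} (hp : 0 < p) (hpq : p < q) :
    ∃ ξ ∈ Set.Ioo p q, q ^ (-μ) * besselJ μ q - p ^ (-μ) * besselJ μ p
      = -((q - p) * (ξ ^ (-μ) * besselJ (μ + 1) ξ)) := by
  have hcont : ContinuousOn (fun x : ℝ => x ^ (-μ) * besselJ μ x) (Set.Icc p q) := by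
    apply ContinuousOn.mul ?_ (besselJ_contOn hμ hp)
    intro x hx
    exact (Real.continuousAt_rpow_const x (-μ)
      (Or.inl (lt_of_lt_of_le hp hx.1).ne')).continuousWithinAt
  have hder : ∀ x ∈ Set.Ioo p q,
      HasDerivAt (fun x : ℝ => x ^ (-μ) * besselJ μ x) (-(x ^ (-μ) * besselJ (μ + 1) x)) x :=
    fun x hx => hasDerivAt_besselJ_down hμ (lt_trans hp hx.1)
  obtain ⟨ξ, hξ, heq⟩ := exists_hasDerivAt_eq_slope
    (fun x : ℝ => x ^ (-μ) * besselJ μ x)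
    (fun x : ℝ => -(x ^ (-μ) * besselJ (μ + 1) x)) hpq hcont hder
  refine ⟨ξ, hξ, ?_⟩
  rw [eq_div_iff (sub_ne_zero.mpr hpq.ne')] at heq
  linarith [heq]

lemma exists_zero_of_sign {ν : ℝ} (hν : -1 < ν) {p q s : ℝ} (hp : 0 < p) (hpq : p < q)
    (h1 : s * besselJ ν p < 0) (h2 : 0 < s * besselJ ν q) :
    ∃ ξ ∈ Set.Ioo p q, besselJ ν ξ = 0 := by
  have hs : s ≠ 0 := by
    intro h; rw [h, zero_mul] at h2; exact lt_irrefl 0 h2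
  have hcont : ContinuousOn (fun x => s * besselJ ν x) (Set.Icc p q) :=
    continuousOn_const.mul (besselJ_contOn hν hp)
  have h0 : (0:ℝ) ∈ Set.Ioo (s * besselJ ν p) (s * besselJ ν q) := ⟨h1, h2⟩
  obtain ⟨ξ, hξ, hfξ⟩ := intermediate_value_Ioo hpq.le hcont h0
  refine ⟨ξ, hξ, ?_⟩
  simp only at hfξ
  rcases mul_eq_zero.mp hfξ with h' | h'
  · exact absurd h' hs
  · exact h' 

lemma sign_persist {ν : ℝ} (hν : -1 < ν) {p q s ξ : ℝ} (hp : 0 < p)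
    (hne : ∀ x ∈ Set.Ioo p q, besselJ ν x ≠ 0) (hξ : ξ ∈ Set.Ioo p q)
    (hpos : 0 < s * besselJ ν ξ) : ∀ x ∈ Set.Ioo p q, 0 < s * besselJ ν x := by
  intro x hx
  by_contra hcon
  push_neg at hcon
  have hs : s ≠ 0 := by
    intro h; rw [h, zero_mul] at hpos; exact lt_irrefl 0 hpos
  have hlt : s * besselJ ν x < 0 :=
    lt_of_le_of_ne hcon (mul_ne_zero hs (hne x hx))
  have hxξ : x ≠ ξ := by
    intro h; rw [h] at hlt; linarith
  rcases lt_or_gt_of_ne hxξ with h | h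
  · obtain ⟨z, hz, hz0⟩ := exists_zero_of_sign hν (lt_trans hp hx.1) h hlt hpos
    exact hne z ⟨lt_trans hx.1 hz.1, lt_trans hz.2 hξ.2⟩ hz0
  · obtain ⟨z, hz, hz0⟩ := exists_zero_of_sign hν (lt_trans hp hξ.1) h
      (by nlinarith : (-s) * besselJ ν ξ < 0) (by nlinarith : 0 < (-s) * besselJ ν x)
    exact hne z ⟨lt_trans hξ.1 hz.1, lt_trans hz.2 hx.2⟩ hz0


lemma rolle_up' {μ : ℝ} (hμ : -1 < μ) {p q : ℝ} (hp : 0 < p) (hpq : p < q)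
    (h1 : besselJ (μ + 1) p = 0) (h2 : besselJ (μ + 1) q = 0) :
    ∃ ξ ∈ Set.Ioo p q, besselJ μ ξ = 0 := by
  obtain ⟨ξ, hξ, heq⟩ := mvt_up hμ hp hpq
  rw [h1, h2, mul_zero, mul_zero, sub_zero] at heq
  refine ⟨ξ, hξ, ?_⟩
  have h3 : (0:ℝ) < ξ ^ (μ + 1) := Real.rpow_pos_of_pos (lt_trans hp hξ.1) _
  have h4 : q - p ≠ 0 := sub_ne_zero.mpr hpq.ne'
  have h5 : (q - p) * (ξ ^ (μ + 1) * besselJ μ ξ) = 0 := heq.symm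
  rcases mul_eq_zero.mp h5 with h | h
  · exact absurd h h4
  · rcases mul_eq_zero.mp h with h | h
    · exact absurd h h3.ne'
    · exact h

lemma rolle_down' {μ : ℝ} (hμ : -1 < μ) {p q : ℝ} (hp : 0 < p) (hpq : p < q)
    (h1 : besselJ μ p = 0) (h2 : besselJ μ q = 0) :
    ∃ ξ ∈ Set.Ioo p q, besselJ (μ + 1) ξ = 0 := by
  obtain ⟨ξ, hξ, heq⟩ := mvt_down hμ hp hpq
  rw [h1, h2, mul_zero, mul_zero, sub_zero] at heq
  refine ⟨ξ, hξ, ?_⟩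
  have h3 : (0:ℝ) < ξ ^ (-μ) := Real.rpow_pos_of_pos (lt_trans hp hξ.1) _
  have h4 : q - p ≠ 0 := sub_ne_zero.mpr hpq.ne'
  have h5 : (q - p) * (ξ ^ (-μ) * besselJ (μ + 1) ξ) = 0 := by linarith
  rcases mul_eq_zero.mp h5 with h | h
  · exact absurd h h4
  · rcases mul_eq_zero.mp h with h | h
    · exact absurd h h3.ne'
    · exact h

lemma mvt_up_sign {μ : ℝ} (hμ : -1 < μ) {p q s : ℝ} (hp : 0 < p) (hpq : p < q)
    (hzp : besselJ (μ + 1) p = 0) (hq : 0 < s * besselJ (μ + 1) q) :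
    ∃ ξ ∈ Set.Ioo p q, 0 < s * besselJ μ ξ := by
  obtain ⟨ξ, hξ, heq⟩ := mvt_up hμ hp hpq
  refine ⟨ξ, hξ, ?_⟩
  have heqs : s * (q ^ (μ + 1) * besselJ (μ + 1) q)
      = (q - p) * (ξ ^ (μ + 1) * (s * besselJ μ ξ)) := by
    have : besselJ (μ + 1) p = 0 := hzp
    linear_combination s * heq + (s * p ^ (μ + 1)) * this
  have h2 : (0:ℝ) < q ^ (μ + 1) := Real.rpow_pos_of_pos (lt_trans hp hpq) _
  have h3 : (0:ℝ) < ξ ^ (μ + 1) := Real.rpow_pos_of_pos (lt_trans hp hξ.1) _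
  by_contra hcon
  push_neg at hcon
  nlinarith [mul_pos h2 hq, mul_nonneg (mul_nonneg (sub_pos.mpr hpq).le h3.le)
    (neg_nonneg.mpr hcon)]

lemma mvt_up_sign' {μ : ℝ} (hμ : -1 < μ) {p q s : ℝ} (hp : 0 < p) (hpq : p < q)
    (hzq : besselJ (μ + 1) q = 0) (hq : 0 < s * besselJ (μ + 1) p) :
    ∃ ξ ∈ Set.Ioo p q, s * besselJ μ ξ < 0 := by
  obtain ⟨ξ, hξ, heq⟩ := mvt_up hμ hp hpq
  refine ⟨ξ, hξ, ?_⟩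
  have heqs : -(s * (p ^ (μ + 1) * besselJ (μ + 1) p))
      = (q - p) * (ξ ^ (μ + 1) * (s * besselJ μ ξ)) := by
    have : besselJ (μ + 1) q = 0 := hzq
    linear_combination s * heq - (s * q ^ (μ + 1)) * this
  have h2 : (0:ℝ) < p ^ (μ + 1) := Real.rpow_pos_of_pos hp _
  have h3 : (0:ℝ) < ξ ^ (μ + 1) := Real.rpow_pos_of_pos (lt_trans hp hξ.1) _
  by_contra hcon
  push_neg at hcon
  nlinarith [mul_pos h2 hq, mul_nonneg (mul_nonneg (sub_pos.mpr hpq).le h3.le) hcon]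

lemma mvt_down_sign {μ : ℝ} (hμ : -1 < μ) {p q s : ℝ} (hp : 0 < p) (hpq : p < q)
    (hzp : besselJ μ p = 0) (hq : 0 < s * besselJ μ q) :
    ∃ ξ ∈ Set.Ioo p q, s * besselJ (μ + 1) ξ < 0 := by
  obtain ⟨ξ, hξ, heq⟩ := mvt_down hμ hp hpq
  refine ⟨ξ, hξ, ?_⟩
  have heqs : s * (q ^ (-μ) * besselJ μ q)
      = -((q - p) * (ξ ^ (-μ) * (s * besselJ (μ + 1) ξ))) := by
    have : besselJ μ p = 0 := hzp
    linear_combination s * heq + (s * p ^ (-μ)) * this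
  have h2 : (0:ℝ) < q ^ (-μ) := Real.rpow_pos_of_pos (lt_trans hp hpq) _
  have h3 : (0:ℝ) < ξ ^ (-μ) := Real.rpow_pos_of_pos (lt_trans hp hξ.1) _
  by_contra hcon
  push_neg at hcon
  nlinarith [mul_pos h2 hq, mul_nonneg (mul_nonneg (sub_pos.mpr hpq).le h3.le) hcon]

lemma mvt_down_sign' {μ : ℝ} (hμ : -1 < μ) {p q s : ℝ} (hp : 0 < p) (hpq : p < q)
    (hzq : besselJ μ q = 0) (hq : 0 < s * besselJ μ p) :
    ∃ ξ ∈ Set.Ioo p q, 0 < s * besselJ (μ + 1) ξ := by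
  obtain ⟨ξ, hξ, heq⟩ := mvt_down hμ hp hpq
  refine ⟨ξ, hξ, ?_⟩
  have heqs : s * (p ^ (-μ) * besselJ μ p)
      = (q - p) * (ξ ^ (-μ) * (s * besselJ (μ + 1) ξ)) := by
    have : besselJ μ q = 0 := hzq
    linear_combination -(s * heq) + (s * q ^ (-μ)) * this
  have h2 : (0:ℝ) < p ^ (-μ) := Real.rpow_pos_of_pos hp _
  have h3 : (0:ℝ) < ξ ^ (-μ) := Real.rpow_pos_of_pos (lt_trans hp hξ.1) _
  by_contra hcon
  push_neg at hcon
  nlinarith [mul_pos h2 hq, mul_nonneg (mul_nonneg (sub_pos.mpr hpq).le h3.le)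
    (neg_nonneg.mpr hcon)]

lemma up_endpoint_left {μ : ℝ} (hμ : -1 < μ) {p q s : ℝ} (hp : 0 < p) (hpq : p < q)
    (hmid : ∀ x ∈ Set.Ioo p q, s * besselJ μ x < 0) (hq : 0 ≤ s * besselJ (μ + 1) q) :
    0 < s * besselJ (μ + 1) p := by
  obtain ⟨ξ, hξ, heq⟩ := mvt_up hμ hp hpq
  have heqs : p ^ (μ + 1) * (s * besselJ (μ + 1) p)
      = q ^ (μ + 1) * (s * besselJ (μ + 1) q) - (q - p) * (ξ ^ (μ + 1) * (s * besselJ μ ξ)) := by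
    linear_combination -(s * heq)
  have h2 : (0:ℝ) < q ^ (μ + 1) := Real.rpow_pos_of_pos (lt_trans hp hpq) _
  have h3 : (0:ℝ) < ξ ^ (μ + 1) := Real.rpow_pos_of_pos (lt_trans hp hξ.1) _
  have h4 : (0:ℝ) < p ^ (μ + 1) := Real.rpow_pos_of_pos hp _
  have h5 := hmid ξ hξ
  by_contra hcon
  push_neg at hcon
  nlinarith [mul_nonneg h2.le hq, mul_pos (mul_pos (sub_pos.mpr hpq) h3) (neg_pos.mpr h5),
    mul_nonneg h4.le (neg_nonneg.mpr hcon)]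

lemma up_endpoint_right {μ : ℝ} (hμ : -1 < μ) {p q s : ℝ} (hp : 0 < p) (hpq : p < q)
    (hmid : ∀ x ∈ Set.Ioo p q, 0 < s * besselJ μ x) (hp' : 0 ≤ s * besselJ (μ + 1) p) :
    0 < s * besselJ (μ + 1) q := by
  obtain ⟨ξ, hξ, heq⟩ := mvt_up hμ hp hpq
  have heqs : q ^ (μ + 1) * (s * besselJ (μ + 1) q)
      = p ^ (μ + 1) * (s * besselJ (μ + 1) p) + (q - p) * (ξ ^ (μ + 1) * (s * besselJ μ ξ)) := by
    linear_combination s * heq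
  have h2 : (0:ℝ) < q ^ (μ + 1) := Real.rpow_pos_of_pos (lt_trans hp hpq) _
  have h3 : (0:ℝ) < ξ ^ (μ + 1) := Real.rpow_pos_of_pos (lt_trans hp hξ.1) _
  have h4 : (0:ℝ) < p ^ (μ + 1) := Real.rpow_pos_of_pos hp _
  have h5 := hmid ξ hξ
  by_contra hcon
  push_neg at hcon
  nlinarith [mul_nonneg h4.le hp', mul_pos (mul_pos (sub_pos.mpr hpq) h3) h5,
    mul_nonneg h2.le (neg_nonneg.mpr hcon)]

lemma down_endpoint_left {μ : ℝ} (hμ : -1 < μ) {p q s : ℝ} (hp : 0 < p) (hpq : p < q)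
    (hmid : ∀ x ∈ Set.Ioo p q, 0 < s * besselJ (μ + 1) x) (hq : 0 ≤ s * besselJ μ q) :
    0 < s * besselJ μ p := by
  obtain ⟨ξ, hξ, heq⟩ := mvt_down hμ hp hpq
  have heqs : p ^ (-μ) * (s * besselJ μ p)
      = q ^ (-μ) * (s * besselJ μ q) + (q - p) * (ξ ^ (-μ) * (s * besselJ (μ + 1) ξ)) := by
    linear_combination -(s * heq)
  have h2 : (0:ℝ) < q ^ (-μ) := Real.rpow_pos_of_pos (lt_trans hp hpq) _
  have h3 : (0:ℝ) < ξ ^ (-μ) := Real.rpow_pos_of_pos (lt_trans hp hξ.1) _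
  have h4 : (0:ℝ) < p ^ (-μ) := Real.rpow_pos_of_pos hp _
  have h5 := hmid ξ hξ
  by_contra hcon
  push_neg at hcon
  nlinarith [mul_nonneg h2.le hq, mul_pos (mul_pos (sub_pos.mpr hpq) h3) h5,
    mul_nonneg h4.le (neg_nonneg.mpr hcon)]

lemma down_endpoint_right {μ : ℝ} (hμ : -1 < μ) {p q s : ℝ} (hp : 0 < p) (hpq : p < q)
    (hmid : ∀ x ∈ Set.Ioo p q, 0 < s * besselJ (μ + 1) x) (hp' : s * besselJ μ p ≤ 0) :
    s * besselJ μ q < 0 := by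
  obtain ⟨ξ, hξ, heq⟩ := mvt_down hμ hp hpq
  have heqs : q ^ (-μ) * (s * besselJ μ q)
      = p ^ (-μ) * (s * besselJ μ p) - (q - p) * (ξ ^ (-μ) * (s * besselJ (μ + 1) ξ)) := by
    linear_combination s * heq
  have h2 : (0:ℝ) < q ^ (-μ) := Real.rpow_pos_of_pos (lt_trans hp hpq) _
  have h3 : (0:ℝ) < ξ ^ (-μ) := Real.rpow_pos_of_pos (lt_trans hp hξ.1) _
  have h4 : (0:ℝ) < p ^ (-μ) := Real.rpow_pos_of_pos hp _
  have h5 := hmid ξ hξ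
  by_contra hcon
  push_neg at hcon
  nlinarith [mul_nonpos_of_nonneg_of_nonpos h4.le hp',
    mul_pos (mul_pos (sub_pos.mpr hpq) h3) h5, mul_nonneg h2.le hcon]

end BesselAux


set_option maxHeartbeats 1600000 in
open BesselAux in
/-- Location of the zero of `J_{k+4}` between consecutive zeros `a < b` of `J_{k+1}` with
`b < 2√((k+2)(k+3))`, depending on the position of the zero `c` of `J_k`. -/
theorem besselJ_add_four_zero_location (k : ℝ) (hk : -1 < k) (a b : ℝ)
    (ha : 0 < a) (hab : a < b)
    (hza : besselJ (k + 1) a = 0) (hzb : besselJ (k + 1) b = 0)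
    (hne : ∀ r ∈ Set.Ioo a b, besselJ (k + 1) r ≠ 0)
    (hb : b < 2 * Real.sqrt ((k + 2) * (k + 3)))
    (c : ℝ) (hc : c ∈ Set.Ioo a b) (hzc : besselJ k c = 0)
    (e : ℝ) (he : e ∈ Set.Ioo a b) (hze : besselJ (k + 3) e = 0) :
    (∃! f, f ∈ Set.Ioo a b ∧ besselJ (k + 4) f = 0) ∧
    ∀ f, f ∈ Set.Ioo a b → besselJ (k + 4) f = 0 →
      (c < Real.sqrt (2 * (k + 1) * (k + 3)) → f ∈ Set.Ioo e c) ∧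
      (Real.sqrt (2 * (k + 1) * (k + 3)) < c ∧ c < 2 * Real.sqrt ((k + 1) * (k + 2)) →
        f ∈ Set.Ioo c b) ∧
      (2 * Real.sqrt ((k + 1) * (k + 2)) < c → f ∈ Set.Ioo e b) := by
  obtain ⟨hac, hcb⟩ := hc
  obtain ⟨hae, heb⟩ := he
  have hb0 : 0 < b := lt_trans ha hab
  have hc0 : 0 < c := lt_trans ha hac
  have he0 : 0 < e := lt_trans ha hae
  have hk1 : (-1:ℝ) < k + 1 := by linarith
  have hk2 : (-1:ℝ) < k + 2 := by linarith
  have hk3 : (-1:ℝ) < k + 3 := by linarith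
  have hk4 : (-1:ℝ) < k + 4 := by linarith
  have hm23 : (0:ℝ) ≤ (k + 2) * (k + 3) := by nlinarith
  have hb2 : b ^ 2 < 4 * ((k + 2) * (k + 3)) := by
    nlinarith [Real.sq_sqrt hm23, Real.sqrt_nonneg ((k + 2) * (k + 3)),
      mul_self_lt_mul_self hb0.le hb]
  have ha2 : a ^ 2 < 4 * ((k + 2) * (k + 3)) := by nlinarith
  -- recurrences, normalized
  have rec1 : ∀ x : ℝ, 0 < x →
      besselJ (k + 2) x = 2 * (k + 1) / x * besselJ (k + 1) x - besselJ k x :=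
    fun x hx => besselJ_rec hk hx
  have rec2 : ∀ x : ℝ, 0 < x →
      besselJ (k + 3) x = 2 * (k + 2) / x * besselJ (k + 2) x - besselJ (k + 1) x := by
    intro x hx
    have h := besselJ_rec (μ := k + 1) hk1 hx
    rw [show k + 1 + 2 = k + 3 by ring, show k + 1 + 1 = k + 2 by ring] at h
    exact h
  have rec3 : ∀ x : ℝ, 0 < x →
      besselJ (k + 4) x = 2 * (k + 3) / x * besselJ (k + 3) x - besselJ (k + 2) x := by
    intro x hx
    have h := besselJ_rec (μ := k + 2) hk2 hx
    rw [show k + 2 + 2 = k + 4 by ring, show k + 2 + 1 = k + 3 by ring] at h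
    exact h
  -- normalized rolle wrappers
  have rup2 : ∀ p q : ℝ, 0 < p → p < q → besselJ (k + 2) p = 0 → besselJ (k + 2) q = 0 →
      ∃ ξ ∈ Set.Ioo p q, besselJ (k + 1) ξ = 0 := by
    intro p q hp hpq h1 h2
    exact rolle_up' hk1 hp hpq (by rw [show k + 1 + 1 = k + 2 by ring]; exact h1)
      (by rw [show k + 1 + 1 = k + 2 by ring]; exact h2)
  have rup3 : ∀ p q : ℝ, 0 < p → p < q → besselJ (k + 3) p = 0 → besselJ (k + 3) q = 0 →
      ∃ ξ ∈ Set.Ioo p q, besselJ (k + 2) ξ = 0 := by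
    intro p q hp hpq h1 h2
    exact rolle_up' hk2 hp hpq (by rw [show k + 2 + 1 = k + 3 by ring]; exact h1)
      (by rw [show k + 2 + 1 = k + 3 by ring]; exact h2)
  have rup4 : ∀ p q : ℝ, 0 < p → p < q → besselJ (k + 4) p = 0 → besselJ (k + 4) q = 0 →
      ∃ ξ ∈ Set.Ioo p q, besselJ (k + 3) ξ = 0 := by
    intro p q hp hpq h1 h2
    exact rolle_up' hk3 hp hpq (by rw [show k + 3 + 1 = k + 4 by ring]; exact h1)
      (by rw [show k + 3 + 1 = k + 4 by ring]; exact h2)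
  -- sign s
  obtain ⟨s, hss, hsJ⟩ : ∃ s : ℝ, s * s = 1 ∧ ∀ x ∈ Set.Ioo a b, 0 < s * besselJ (k + 1) x := by
    have hmid : (a + b) / 2 ∈ Set.Ioo a b := ⟨by linarith, by linarith⟩
    rcases (hne _ hmid).lt_or_gt with h | h
    · exact ⟨-1, by norm_num, sign_persist hk1 ha hne hmid (by linarith)⟩
    · exact ⟨1, by norm_num, sign_persist hk1 ha hne hmid (by linarith)⟩
  have hs0 : s ≠ 0 := by intro h; rw [h] at hss; norm_num at hss
  -- J_k : unique zero c, signs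
  have huk : ∀ x ∈ Set.Ioo a b, besselJ k x = 0 → x = c := by
    intro x hx hx0
    by_contra hxc
    rcases lt_or_gt_of_ne hxc with h | h
    · obtain ⟨z, hz, hz0⟩ := rolle_down' hk (lt_trans ha hx.1) h hx0 hzc
      exact hne z ⟨lt_trans hx.1 hz.1, lt_trans hz.2 hcb⟩ hz0
    · obtain ⟨z, hz, hz0⟩ := rolle_down' hk hc0 h hzc hx0
      exact hne z ⟨lt_trans hac hz.1, lt_trans hz.2 hx.2⟩ hz0
  have hJk_ac : ∀ x ∈ Set.Ioo a c, 0 < s * besselJ k x := by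
    have htm : (a + c) / 2 ∈ Set.Ioo a c := ⟨by linarith, by linarith⟩
    obtain ⟨ξ, hξ, hξp⟩ := mvt_up_sign hk ha htm.1 hza (hsJ _ ⟨htm.1, lt_trans htm.2 hcb⟩)
    have hneK : ∀ x ∈ Set.Ioo a c, besselJ k x ≠ 0 := by
      intro x hx h0
      exact absurd (huk x ⟨hx.1, lt_trans hx.2 hcb⟩ h0) hx.2.ne
    exact sign_persist hk ha hneK ⟨hξ.1, lt_trans hξ.2 htm.2⟩ hξp
  have hJk_cb : ∀ x ∈ Set.Ioo c b, 0 < (-s) * besselJ k x := by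
    have htm : (c + b) / 2 ∈ Set.Ioo c b := ⟨by linarith, by linarith⟩
    have htm0 : (0:ℝ) < (c + b) / 2 := by linarith
    obtain ⟨ξ, hξ, hξp⟩ := mvt_up_sign' hk htm0 htm.2 hzb (hsJ _ ⟨lt_trans hac htm.1, htm.2⟩)
    have hneK : ∀ x ∈ Set.Ioo c b, besselJ k x ≠ 0 := by
      intro x hx h0
      exact absurd (huk x ⟨lt_trans hac hx.1, hx.2⟩ h0) hx.1.ne'
    exact sign_persist hk hc0 hneK ⟨lt_trans htm.1 hξ.1, hξ.2⟩ (by linarith [hξp])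
  have hJka : 0 < s * besselJ k a := by
    have htm : (a + c) / 2 ∈ Set.Ioo a c := ⟨by linarith, by linarith⟩
    exact down_endpoint_left hk ha htm.1
      (fun y hy => hsJ y ⟨hy.1, by linarith [hy.2, htm.2]⟩) (hJk_ac _ htm).le
  have hJkb : s * besselJ k b < 0 := by
    have htm : (c + b) / 2 ∈ Set.Ioo c b := ⟨by linarith, by linarith⟩
    have htm0 : (0:ℝ) < (c + b) / 2 := by linarith
    exact down_endpoint_right hk htm0 htm.2
      (fun y hy => hsJ y ⟨by linarith [hy.1, htm.1], hy.2⟩)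
      (by linarith [hJk_cb _ htm])
  -- d : unique zero of J_{k+2}
  obtain ⟨d, hd, hd0⟩ : ∃ d ∈ Set.Ioo a b, besselJ (k + 2) d = 0 := by
    have h := rolle_down' hk1 ha hab hza hzb
    rw [show k + 1 + 1 = k + 2 by ring] at h
    exact h
  have hda : 0 < d := lt_trans ha hd.1
  have hud : ∀ x ∈ Set.Ioo a b, besselJ (k + 2) x = 0 → x = d := by
    intro x hx hx0
    by_contra hxd
    rcases lt_or_gt_of_ne hxd with h | h
    · obtain ⟨z, hz, hz0⟩ := rup2 x d (lt_trans ha hx.1) h hx0 hd0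
      exact hne z ⟨lt_trans hx.1 hz.1, lt_trans hz.2 hd.2⟩ hz0
    · obtain ⟨z, hz, hz0⟩ := rup2 d x hda h hd0 hx0
      exact hne z ⟨lt_trans hd.1 hz.1, lt_trans hz.2 hx.2⟩ hz0
  have hJ2_ad : ∀ x ∈ Set.Ioo a d, 0 < (-s) * besselJ (k + 2) x := by
    have htm : (a + d) / 2 ∈ Set.Ioo a d := ⟨by linarith [hd.1], by linarith [hd.1]⟩
    obtain ⟨ξ, hξ, hξp⟩ : ∃ ξ ∈ Set.Ioo a ((a + d)/2), s * besselJ (k + 2) ξ < 0 := by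
      have h := mvt_down_sign (μ := k + 1) hk1 ha htm.1 hza
        (hsJ _ ⟨htm.1, lt_trans htm.2 hd.2⟩)
      rw [show k + 1 + 1 = k + 2 by ring] at h
      exact h
    have hneK : ∀ x ∈ Set.Ioo a d, besselJ (k + 2) x ≠ 0 := by
      intro x hx h0
      exact absurd (hud x ⟨hx.1, lt_trans hx.2 hd.2⟩ h0) hx.2.ne
    exact sign_persist hk2 ha hneK ⟨hξ.1, lt_trans hξ.2 htm.2⟩ (by linarith [hξp])
  have hJ2_db : ∀ x ∈ Set.Ioo d b, 0 < s * besselJ (k + 2) x := by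
    have htm : (d + b) / 2 ∈ Set.Ioo d b := ⟨by linarith [hd.2], by linarith [hd.2]⟩
    have htm0 : (0:ℝ) < (d + b) / 2 := by linarith
    obtain ⟨ξ, hξ, hξp⟩ : ∃ ξ ∈ Set.Ioo ((d + b)/2) b, 0 < s * besselJ (k + 2) ξ := by
      have h := mvt_down_sign' (μ := k + 1) hk1 htm0 htm.2 hzb
        (hsJ _ ⟨lt_trans hd.1 htm.1, htm.2⟩)
      rw [show k + 1 + 1 = k + 2 by ring] at h
      exact h
    have hneK : ∀ x ∈ Set.Ioo d b, besselJ (k + 2) x ≠ 0 := by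
      intro x hx h0
      exact absurd (hud x ⟨lt_trans hd.1 hx.1, hx.2⟩ h0) hx.1.ne'
    exact sign_persist hk2 hda hneK ⟨lt_trans htm.1 hξ.1, hξ.2⟩ hξp
  -- J_{k+2} at e, b, a
  have hJ2e : 0 < s * besselJ (k + 2) e := by
    have h := rec2 e he0
    rw [hze] at h
    have h1 := hsJ e ⟨hae, heb⟩
    have hcoef : (0:ℝ) < 2 * (k + 2) / e := div_pos (by linarith) he0
    have hs2 : s * besselJ (k + 1) e = 2 * (k + 2) / e * (s * besselJ (k + 2) e) := by
      linear_combination s * h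
    by_contra hcon
    push_neg at hcon
    linarith [mul_nonneg hcoef.le (neg_nonneg.mpr hcon)]
  have hde : d < e := by
    rcases lt_trichotomy e d with h | h | h
    · exact absurd (hJ2_ad e ⟨hae, h⟩) (not_lt.mpr (by linarith [hJ2e]))
    · rw [h] at hJ2e; rw [hd0] at hJ2e; norm_num at hJ2e
    · exact h
  have hJ2b : 0 < s * besselJ (k + 2) b := by
    have h := rec1 b hb0
    rw [hzb] at h
    have hs2 : s * besselJ (k + 2) b = -(s * besselJ k b) := by linear_combination s * h
    rw [hs2]
    linarith [hJkb]
  have hJ2a : s * besselJ (k + 2) a < 0 := by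
    have h := rec1 a ha
    rw [hza] at h
    have hs2 : s * besselJ (k + 2) a = -(s * besselJ k a) := by linear_combination s * h
    rw [hs2]
    linarith [hJka]
  -- J_{k+3} : unique zero e, signs
  have hJ3d : s * besselJ (k + 3) d < 0 := by
    have h := rec2 d hda
    rw [hd0] at h
    have h1 := hsJ d hd
    have hs3 : s * besselJ (k + 3) d = -(s * besselJ (k + 1) d) := by linear_combination s * h
    rw [hs3]; linarith
  have hue : ∀ x ∈ Set.Ioo a b, besselJ (k + 3) x = 0 → x = e := by
    intro x hx hx0
    have hx0' : 0 < x := lt_trans ha hx.1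
    have hJ2x : 0 < s * besselJ (k + 2) x := by
      have h := rec2 x hx0'
      rw [hx0] at h
      have h1 := hsJ x hx
      have hcoef : (0:ℝ) < 2 * (k + 2) / x := div_pos (by linarith) hx0'
      have hs2 : s * besselJ (k + 1) x = 2 * (k + 2) / x * (s * besselJ (k + 2) x) := by
        linear_combination s * h
      by_contra hcon
      push_neg at hcon
      linarith [mul_nonneg hcoef.le (neg_nonneg.mpr hcon)]
    have hdx : d < x := by
      rcases lt_trichotomy x d with h | h | h
      · exact absurd (hJ2_ad x ⟨hx.1, h⟩) (not_lt.mpr (by linarith [hJ2x]))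
      · rw [h, hd0, mul_zero] at hJ2x; norm_num at hJ2x
      · exact h
    by_contra hxe
    rcases lt_or_gt_of_ne hxe with h | h
    · obtain ⟨z, hz, hz0⟩ := rup3 x e hx0' h hx0 hze
      exact absurd (hJ2_db z ⟨lt_trans hdx hz.1, lt_trans hz.2 heb⟩) (by rw [hz0, mul_zero]; norm_num)
    · obtain ⟨z, hz, hz0⟩ := rup3 e x he0 h hze hx0
      have hzd : d < z := by
        have : d < e := hde
        exact lt_trans this hz.1
      exact absurd (hJ2_db z ⟨hzd, lt_trans hz.2 hx.2⟩) (by rw [hz0, mul_zero]; norm_num)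
  have hJ3_ae : ∀ x ∈ Set.Ioo a e, 0 < (-s) * besselJ (k + 3) x := by
    have hneK : ∀ x ∈ Set.Ioo a e, besselJ (k + 3) x ≠ 0 := by
      intro x hx h0
      exact absurd (hue x ⟨hx.1, lt_trans hx.2 heb⟩ h0) hx.2.ne
    exact sign_persist hk3 ha hneK ⟨hd.1, hde⟩ (by linarith [hJ3d])
  have hJ3_eb : ∀ x ∈ Set.Ioo e b, 0 < s * besselJ (k + 3) x := by
    intro x hx
    have h := up_endpoint_right (μ := k + 2) hk2 he0 hx.1
      (fun y hy => hJ2_db y ⟨lt_trans hde hy.1, lt_trans hy.2 hx.2⟩)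
      (by rw [show k + 2 + 1 = k + 3 by ring, hze, mul_zero])
    rw [show k + 2 + 1 = k + 3 by ring] at h
    exact h
  -- J_{k+4} values
  have hJ4e : s * besselJ (k + 4) e < 0 := by
    have h := rec3 e he0
    rw [hze] at h
    have hs4 : s * besselJ (k + 4) e = -(s * besselJ (k + 2) e) := by linear_combination s * h
    rw [hs4]; linarith [hJ2e]
  have hJ4b : 0 < s * besselJ (k + 4) b := by
    have h3 := rec2 b hb0
    rw [hzb] at h3
    have h4 := rec3 b hb0
    have hs4 : s * besselJ (k + 4) b
        = (4 * (k + 2) * (k + 3) / b ^ 2 - 1) * (s * besselJ (k + 2) b) := by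
      rw [h4, h3]; field_simp; ring
    rw [hs4]
    have hcoef : 0 < 4 * (k + 2) * (k + 3) / b ^ 2 - 1 := by
      rw [sub_pos, lt_div_iff₀ (by positivity)]
      nlinarith [hb2]
    exact mul_pos hcoef hJ2b
  have hJ4a : s * besselJ (k + 4) a < 0 := by
    have h3 := rec2 a ha
    rw [hza] at h3
    have h4 := rec3 a ha
    have hs4 : s * besselJ (k + 4) a
        = (4 * (k + 2) * (k + 3) / a ^ 2 - 1) * (s * besselJ (k + 2) a) := by
      rw [h4, h3]; field_simp; ring
    rw [hs4]
    have hcoef : 0 < 4 * (k + 2) * (k + 3) / a ^ 2 - 1 := by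
      rw [sub_pos, lt_div_iff₀ (by positivity)]
      nlinarith [ha2]
    exact mul_neg_of_pos_of_neg hcoef hJ2a
  -- no zeros of J_{k+4} in (a,e)
  have hnoz_ae : ∀ x ∈ Set.Ioo a e, besselJ (k + 4) x ≠ 0 := by
    intro x hx hx0
    have h := up_endpoint_left (μ := k + 3) (s := s) hk3 ha hx.1
      (fun y hy => by
        have := hJ3_ae y ⟨hy.1, lt_trans hy.2 hx.2⟩
        linarith [this])
      (by rw [show k + 3 + 1 = k + 4 by ring, hx0, mul_zero])
    rw [show k + 3 + 1 = k + 4 by ring] at h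
    linarith [hJ4a]
  -- existence of f₀
  obtain ⟨f₀, hf₀, hf₀0⟩ : ∃ f₀ ∈ Set.Ioo e b, besselJ (k + 4) f₀ = 0 :=
    exists_zero_of_sign hk4 he0 heb hJ4e hJ4b
  have hf₀a : f₀ ∈ Set.Ioo a b := ⟨lt_trans hae hf₀.1, hf₀.2⟩
  have hf₀pos : 0 < f₀ := lt_trans he0 hf₀.1
  -- uniqueness
  have huf : ∀ x ∈ Set.Ioo a b, besselJ (k + 4) x = 0 → x = f₀ := by
    intro x hx hx0
    have hex : e < x := by
      rcases lt_trichotomy x e with h | h | h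
      · exact absurd hx0 (hnoz_ae x ⟨hx.1, h⟩)
      · exfalso
        rw [h] at hx0
        rw [hx0, mul_zero] at hJ4e
        exact lt_irrefl 0 hJ4e
      · exact h
    by_contra hxf
    rcases lt_or_gt_of_ne hxf with h | h
    · obtain ⟨z, hz, hz0⟩ := rup4 x f₀ (lt_trans ha hx.1) h hx0 hf₀0
      exact absurd (hJ3_eb z ⟨lt_trans hex hz.1, lt_trans hz.2 hf₀.2⟩)
        (by rw [hz0, mul_zero]; norm_num)
    · obtain ⟨z, hz, hz0⟩ := rup4 f₀ x hf₀pos h hf₀0 hx0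
      exact absurd (hJ3_eb z ⟨lt_trans hf₀.1 hz.1, lt_trans hz.2 hx.2⟩)
        (by rw [hz0, mul_zero]; norm_num)
  -- signs of J_{k+4} around f₀
  have hJ4_ae : ∀ x ∈ Set.Ioo a e, s * besselJ (k + 4) x < 0 := by
    intro x hx
    rcases lt_trichotomy (s * besselJ (k + 4) x) 0 with h | h | h
    · exact h
    · exfalso
      have : besselJ (k + 4) x = 0 := by
        rcases mul_eq_zero.mp h with h' | h'
        · exact absurd h' hs0
        · exact h'
      exact hnoz_ae x hx this
    · exfalso
      obtain ⟨z, hz, hz0⟩ := exists_zero_of_sign hk4 (lt_trans ha hx.1) hx.2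
        (s := -s) (by linarith) (by linarith [hJ4e])
      exact hnoz_ae z ⟨lt_trans hx.1 hz.1, hz.2⟩ hz0
  have hJ4_ef : ∀ x ∈ Set.Ioo e f₀, s * besselJ (k + 4) x < 0 := by
    intro x hx
    have hxab : x ∈ Set.Ioo a b := ⟨lt_trans hae hx.1, lt_trans hx.2 hf₀.2⟩
    rcases lt_trichotomy (s * besselJ (k + 4) x) 0 with h | h | h
    · exact h
    · exfalso
      have hx0 : besselJ (k + 4) x = 0 := by
        rcases mul_eq_zero.mp h with h' | h'
        · exact absurd h' hs0
        · exact h'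
      exact absurd (huf x hxab hx0) hx.2.ne
    · exfalso
      obtain ⟨z, hz, hz0⟩ := exists_zero_of_sign hk4 he0 hx.1 hJ4e h
      have := huf z ⟨lt_trans hae hz.1, lt_trans (lt_trans hz.2 hx.2) hf₀.2⟩ hz0
      rw [this] at hz
      exact absurd (lt_trans hz.2 hx.2) (lt_irrefl f₀)
  have hJ4_fb : ∀ x ∈ Set.Ioo f₀ b, 0 < s * besselJ (k + 4) x := by
    intro x hx
    have hxab : x ∈ Set.Ioo a b := ⟨lt_trans hf₀a.1 hx.1, hx.2⟩
    rcases lt_trichotomy (s * besselJ (k + 4) x) 0 with h | h | h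
    · exfalso
      obtain ⟨z, hz, hz0⟩ := exists_zero_of_sign hk4 (lt_trans ha hxab.1) hx.2 h hJ4b
      have := huf z ⟨lt_trans hxab.1 hz.1, hz.2⟩ hz0
      rw [this] at hz
      exact absurd (lt_trans hx.1 hz.1) (lt_irrefl f₀)
    · exfalso
      have hx0 : besselJ (k + 4) x = 0 := by
        rcases mul_eq_zero.mp h with h' | h'
        · exact absurd h' hs0
        · exact h'
      exact absurd (huf x hxab hx0) hx.1.ne'
    · exact h
  -- value at c
  have hJ4c : s * besselJ (k + 4) c
      = 4 * (k + 2) * (2 * (k + 1) * (k + 3) - c ^ 2) / c ^ 3 * (s * besselJ (k + 1) c) := by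
    have h2 := rec1 c hc0
    rw [hzc] at h2
    have h3 := rec2 c hc0
    have h4 := rec3 c hc0
    rw [h4, h3, h2]
    field_simp
    ring
  have hJ1c := hsJ c ⟨hac, hcb⟩
  refine ⟨⟨f₀, ⟨hf₀a, hf₀0⟩, fun y hy => huf y hy.1 hy.2⟩, ?_⟩
  intro f hf hf0
  have hff : f = f₀ := huf f hf hf0
  subst hff
  refine ⟨?_, ?_, ?_⟩
  · -- case 1 : c < sqrt (2(k+1)(k+3))
    intro h1
    have hX : (0:ℝ) ≤ 2 * (k + 1) * (k + 3) := by nlinarith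
    have hc2 : c ^ 2 < 2 * (k + 1) * (k + 3) := by
      nlinarith [mul_self_lt_mul_self hc0.le h1, Real.sq_sqrt hX]
    have hJ4cpos : 0 < s * besselJ (k + 4) c := by
      rw [hJ4c]
      have hcoef : 0 < 4 * (k + 2) * (2 * (k + 1) * (k + 3) - c ^ 2) / c ^ 3 := by
        apply div_pos ?_ (by positivity)
        nlinarith
      exact mul_pos hcoef hJ1c
    have hec : e < c := by
      rcases lt_trichotomy c e with h | h | h
      · exact absurd (hJ4_ae c ⟨hac, h⟩) (by linarith)
      · exfalso; rw [h] at hJ4cpos; linarith [hJ4e]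
      · exact h
    have hfc : f < c := by
      rcases lt_trichotomy c f with h | h | h
      · exact absurd (hJ4_ef c ⟨hec, h⟩) (by linarith)
      · exfalso; rw [h, hf₀0, mul_zero] at hJ4cpos; exact lt_irrefl 0 hJ4cpos
      · exact h
    exact ⟨hf₀.1, hfc⟩
  · -- case 2
    rintro ⟨h1, _⟩
    have hX : (0:ℝ) ≤ 2 * (k + 1) * (k + 3) := by nlinarith
    have hc2 : 2 * (k + 1) * (k + 3) < c ^ 2 := by
      nlinarith [mul_self_lt_mul_self (Real.sqrt_nonneg (2 * (k + 1) * (k + 3))) h1,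
        Real.sq_sqrt hX]
    have hJ4cneg : s * besselJ (k + 4) c < 0 := by
      rw [hJ4c]
      have hcoef : 4 * (k + 2) * (2 * (k + 1) * (k + 3) - c ^ 2) / c ^ 3 < 0 := by
        apply div_neg_of_neg_of_pos ?_ (by positivity)
        nlinarith
      exact mul_neg_of_neg_of_pos hcoef hJ1c
    have hcf : c < f := by
      rcases lt_trichotomy f c with h | h | h
      · exact absurd (hJ4_fb c ⟨h, hcb⟩) (by linarith)
      · exfalso; rw [← h, hf₀0, mul_zero] at hJ4cneg; exact lt_irrefl 0 hJ4cneg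
      · exact h
    exact ⟨hcf, hf₀.2⟩
  · intro _
    exact hf₀
end
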